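/- arXiv:1905.01869 — 5 statements merged into one kernel-verified Lean document; each statement's English description precedes it below -/
import Mathlib

section
/- Let G be a topological group equipped with a metric that is invariant under right translations, i.e. dist(a·g, b·g) = dist(a, b) for all a, b, g ∈ G. Let p, q : [0,1] → G be continuous paths with p(0) = q(0) = 1. Define the concatenated path c : [0,1] → G by c(t) = p(2t) for t ∈ [0, 1/2] and c(t) = q(2t−1)·p(1) for t ∈ [1/2, 1]. Then A(c) ≤ A(p) + A(q). -/
open Set
open scoped ENNReal

/-- Two maps `[0,1] → G` are homotopic relatively to the endpoints `{0, 1}`. -/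
def HomotopicRelEndpoints {G : Type*} [TopologicalSpace G] (p q : ℝ → G) : Prop :=
  ∃ H : ℝ × ℝ → G, ContinuousOn H (Set.Icc 0 1 ×ˢ Set.Icc 0 1) ∧
    (∀ t ∈ Set.Icc (0:ℝ) 1, H (0, t) = p t) ∧
    (∀ t ∈ Set.Icc (0:ℝ) 1, H (1, t) = q t) ∧
    (∀ s ∈ Set.Icc (0:ℝ) 1, H (s, 0) = p 0) ∧
    (∀ s ∈ Set.Icc (0:ℝ) 1, H (s, 1) = p 1)

/-- The amplitude of a path `p : [0,1] → G` in a metric group `G`: the infimum of the total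
variations (lengths) of continuous paths with the same endpoints that are homotopic to `p`
relatively to `{0, 1}`. -/
noncomputable def amplitude {G : Type*} [MetricSpace G] (p : ℝ → G) : ℝ≥0∞ :=
  ⨅ (q : ℝ → G) (_ : ContinuousOn q (Set.Icc 0 1)) (_ : q 0 = p 0) (_ : q 1 = p 1)
    (_ : HomotopicRelEndpoints p q), eVariationOn q (Set.Icc 0 1)

lemma continuousOn_union_closed' {X Y : Type*} [TopologicalSpace X] [TopologicalSpace Y]
    {s t : Set X} {f : X → Y} (hs : IsClosed s) (ht : IsClosed t)
    (hfs : ContinuousOn f s) (hft : ContinuousOn f t) : ContinuousOn f (s ∪ t) := by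
  intro x hx
  have h1 : ContinuousWithinAt f s x := by
    by_cases h : x ∈ s
    · exact hfs x h
    · exact continuousWithinAt_of_notMem_closure (by rwa [hs.closure_eq])
  have h2 : ContinuousWithinAt f t x := by
    by_cases h : x ∈ t
    · exact hft x h
    · exact continuousWithinAt_of_notMem_closure (by rwa [ht.closure_eq])
  exact h1.union h2

lemma evar_mul_right' {G : Type*} [Group G] [MetricSpace G]
    (hright : ∀ a b g : G, dist (a * g) (b * g) = dist a b)
    (f : ℝ → G) (g : G) (s : Set ℝ) :
    eVariationOn (fun x => f x * g) s = eVariationOn f s := by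
  have key : ∀ a b : G, edist (a * g) (b * g) = edist a b := fun a b => by
    rw [edist_dist, edist_dist, hright]
  apply le_antisymm
  · apply iSup_le
    rintro ⟨n, u, hu, us⟩
    exact le_trans (le_of_eq (Finset.sum_congr rfl fun i _ => key _ _))
      (eVariationOn.sum_le (f := f) (n := n) hu us)
  · apply iSup_le
    rintro ⟨n, u, hu, us⟩
    exact le_trans (le_of_eq (Finset.sum_congr rfl fun i _ => (key _ _).symm))
      (eVariationOn.sum_le (n := n) hu us)

/-- In a topological group `G` with a right-invariant metric, the amplitude of
the concatenation `c` of a path `p` with a right-translate of a path `q` (both starting at the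
identity) is at most `A(p) + A(q)`. -/
theorem amplitude_concat_le
    {G : Type*} [Group G] [MetricSpace G] [IsTopologicalGroup G]
    (hright : ∀ a b g : G, dist (a * g) (b * g) = dist a b)
    (p q : ℝ → G)
    (hp : ContinuousOn p (Set.Icc 0 1)) (hq : ContinuousOn q (Set.Icc 0 1))
    (hp0 : p 0 = 1) (hq0 : q 0 = 1)
    (c : ℝ → G)
    (hc₁ : ∀ t ∈ Set.Icc (0:ℝ) (1/2), c t = p (2 * t))
    (hc₂ : ∀ t ∈ Set.Icc (1/2 : ℝ) 1, c t = q (2 * t - 1) * p 1) :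
    amplitude c ≤ amplitude p + amplitude q := by
  have hc0 : c 0 = p 0 := by
    have := hc₁ 0 (by norm_num); simpa using this
  have hc1 : c 1 = q 1 * p 1 := by
    have h := hc₂ 1 (by norm_num)
    rw [show (2 * (1:ℝ) - 1) = 1 by norm_num] at h
    exact h
  -- the key estimate
  have key : ∀ p' : ℝ → G, ContinuousOn p' (Set.Icc 0 1) → p' 0 = p 0 → p' 1 = p 1 →
      HomotopicRelEndpoints p p' →
      ∀ q' : ℝ → G, ContinuousOn q' (Set.Icc 0 1) → q' 0 = q 0 → q' 1 = q 1 →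
      HomotopicRelEndpoints q q' →
      amplitude c ≤ eVariationOn p' (Set.Icc 0 1) + eVariationOn q' (Set.Icc 0 1) := by
    intro p' hp' hp'0 hp'1 ⟨Hp, HpC, Hp0, Hp1, HpL, HpR⟩
    intro q' hq' hq'0 hq'1 ⟨Hq, HqC, Hq0, Hq1, HqL, HqR⟩
    set c' : ℝ → G := fun t => if t ≤ 1/2 then p' (2 * t) else q' (2 * t - 1) * p 1 with hc'
    have maps1 : MapsTo (fun t : ℝ => 2 * t) (Icc 0 (1/2)) (Icc 0 1) := by
      intro t ht; simp only [mem_Icc] at *; constructor <;> linarith [ht.1, ht.2]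
    have maps2 : MapsTo (fun t : ℝ => 2 * t - 1) (Icc (1/2) 1) (Icc 0 1) := by
      intro t ht; simp only [mem_Icc] at *; constructor <;> linarith [ht.1, ht.2]
    have eq1 : EqOn c' (fun t => p' (2 * t)) (Icc 0 (1/2)) := by
      intro t ht; simp only [hc', if_pos ht.2]
    have eq2 : EqOn c' (fun t => q' (2 * t - 1) * p 1) (Icc (1/2) 1) := by
      intro t ht
      by_cases h : t ≤ 1/2
      · have htt : t = 1/2 := le_antisymm h ht.1
        subst htt
        simp only [hc', if_pos le_rfl]
        norm_num [hp'1, hq'0, hq0]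
      · simp only [hc', if_neg h]
    have hcont1 : ContinuousOn (fun t : ℝ => p' (2 * t)) (Icc 0 (1/2)) :=
      hp'.comp ((continuous_const.mul continuous_id).continuousOn) maps1
    have hcont2 : ContinuousOn (fun t : ℝ => q' (2 * t - 1) * p 1) (Icc (1/2) 1) :=
      (hq'.comp (((continuous_const.mul continuous_id).sub continuous_const).continuousOn)
        maps2).mul continuousOn_const
    have hunion : Icc (0:ℝ) 1 = Icc 0 (1/2) ∪ Icc (1/2) 1 :=
      (Icc_union_Icc_eq_Icc (by norm_num) (by norm_num)).symm
    have hc'cont : ContinuousOn c' (Icc 0 1) := by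
      rw [hunion]
      exact continuousOn_union_closed' isClosed_Icc isClosed_Icc
        (hcont1.congr eq1) (hcont2.congr eq2)
    have hc'0 : c' 0 = c 0 := by
      simp only [hc']; norm_num [hp'0, hc0]
    have hc'1 : c' 1 = c 1 := by
      simp only [hc']; norm_num [hq'1, hc1]
    -- the homotopy
    have hhtpy : HomotopicRelEndpoints c c' := by
      refine ⟨fun x => if x.2 ≤ 1/2 then Hp (x.1, 2 * x.2) else Hq (x.1, 2 * x.2 - 1) * p 1,
        ?_, ?_, ?_, ?_, ?_⟩
      · -- continuity on the square
        have hsq : (Icc (0:ℝ) 1 ×ˢ Icc (0:ℝ) 1) =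
            (Icc (0:ℝ) 1 ×ˢ Icc (0:ℝ) (1/2)) ∪ (Icc (0:ℝ) 1 ×ˢ Icc (1/2) 1) := by
          rw [hunion, prod_union]
        rw [hsq]
        have mapsA : MapsTo (fun x : ℝ × ℝ => (x.1, 2 * x.2))
            (Icc (0:ℝ) 1 ×ˢ Icc (0:ℝ) (1/2)) (Icc (0:ℝ) 1 ×ˢ Icc (0:ℝ) 1) := by
          rintro ⟨s, t⟩ ⟨hs, ht⟩; exact ⟨hs, maps1 ht⟩
        have mapsB : MapsTo (fun x : ℝ × ℝ => (x.1, 2 * x.2 - 1))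
            (Icc (0:ℝ) 1 ×ˢ Icc (1/2:ℝ) 1) (Icc (0:ℝ) 1 ×ˢ Icc (0:ℝ) 1) := by
          rintro ⟨s, t⟩ ⟨hs, ht⟩; exact ⟨hs, maps2 ht⟩
        have hA : ContinuousOn (fun x : ℝ × ℝ => Hp (x.1, 2 * x.2))
            (Icc (0:ℝ) 1 ×ˢ Icc (0:ℝ) (1/2)) :=
          HpC.comp ((continuous_fst.prodMk (continuous_const.mul continuous_snd)).continuousOn)
            mapsA
        have hB : ContinuousOn (fun x : ℝ × ℝ => Hq (x.1, 2 * x.2 - 1) * p 1)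
            (Icc (0:ℝ) 1 ×ˢ Icc (1/2:ℝ) 1) :=
          (HqC.comp ((continuous_fst.prodMk
            ((continuous_const.mul continuous_snd).sub continuous_const)).continuousOn)
            mapsB).mul continuousOn_const
        refine continuousOn_union_closed' (isClosed_Icc.prod isClosed_Icc)
          (isClosed_Icc.prod isClosed_Icc) (hA.congr ?_) (hB.congr ?_)
        · rintro ⟨s, t⟩ ⟨hs, ht⟩
          simp only [if_pos ht.2]
        · rintro ⟨s, t⟩ ⟨hs, ht⟩
          by_cases h : t ≤ 1/2
          · have htt : t = 1/2 := le_antisymm h ht.1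
            subst htt
            have e1 : Hp (s, 2 * (1/2 : ℝ)) = p 1 := by
              norm_num; exact HpR s hs
            have e2 : Hq (s, 2 * (1/2 : ℝ) - 1) = q 0 := by
              norm_num; exact HqL s hs
            simp only [if_pos le_rfl, e1, e2, hq0, one_mul]
          · simp only [if_neg h]
      · intro t ht
        by_cases h : t ≤ 1/2
        · simp only [if_pos h]
          rw [Hp0 (2 * t) (maps1 ⟨ht.1, h⟩), ← hc₁ t ⟨ht.1, h⟩]
        · simp only [if_neg h]
          rw [Hq0 (2 * t - 1) (maps2 ⟨le_of_not_ge h, ht.2⟩), ← hc₂ t ⟨le_of_not_ge h, ht.2⟩]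
      · intro t ht
        by_cases h : t ≤ 1/2
        · simp only [if_pos h, hc']
          rw [Hp1 (2 * t) (maps1 ⟨ht.1, h⟩)]
        · simp only [if_neg h, hc']
          rw [Hq1 (2 * t - 1) (maps2 ⟨le_of_not_ge h, ht.2⟩)]
      · intro s hs
        have : (0:ℝ) ≤ 1/2 := by norm_num
        simp only [if_pos this]
        rw [show (2 * (0:ℝ)) = 0 by norm_num, HpL s hs, hc0]
      · intro s hs
        have : ¬ ((1:ℝ) ≤ 1/2) := by norm_num
        simp only [if_neg this]
        rw [show (2 * (1:ℝ) - 1) = 1 by norm_num, HqR s hs, hc1]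
    -- the variation bound
    have hvar : eVariationOn c' (Icc 0 1) ≤
        eVariationOn p' (Set.Icc 0 1) + eVariationOn q' (Set.Icc 0 1) := by
      have split := eVariationOn.Icc_add_Icc c' (s := Icc (0:ℝ) 1)
        (by norm_num : (0:ℝ) ≤ 1/2) (by norm_num : (1/2:ℝ) ≤ 1) (by norm_num)
      have i1 : Icc (0:ℝ) 1 ∩ Icc 0 (1/2) = Icc 0 (1/2) :=
        inter_eq_self_of_subset_right (Icc_subset_Icc le_rfl (by norm_num))
      have i2 : Icc (0:ℝ) 1 ∩ Icc (1/2) 1 = Icc (1/2) 1 :=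
        inter_eq_self_of_subset_right (Icc_subset_Icc (by norm_num) le_rfl)
      have i3 : Icc (0:ℝ) 1 ∩ Icc 0 1 = Icc 0 1 := inter_self _
      rw [i1, i2, i3] at split
      rw [← split]
      have himg1 : (fun t : ℝ => 2 * t) '' Icc 0 (1/2) = Icc 0 1 := by
        rw [show (fun t : ℝ => 2 * t) = (fun t : ℝ => 2 * t + 0) by funext t; ring,
          image_affine_Icc' (by norm_num : (0:ℝ) < 2)]
        norm_num
      have himg2 : (fun t : ℝ => 2 * t - 1) '' Icc (1/2) 1 = Icc 0 1 := by
        rw [show (fun t : ℝ => 2 * t - 1) = (fun t : ℝ => 2 * t + (-1)) by funext t; ring,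
          image_affine_Icc' (by norm_num : (0:ℝ) < 2)]
        norm_num
      have v1 : eVariationOn c' (Icc 0 (1/2)) = eVariationOn p' (Icc 0 1) := by
        rw [eVariationOn.eq_of_eqOn eq1]
        have := eVariationOn.comp_eq_of_monotoneOn p' (fun t : ℝ => 2 * t)
          (fun a _ b _ hab => by dsimp; linarith : MonotoneOn (fun t : ℝ => 2 * t) (Icc 0 (1/2)))
        rw [himg1] at this
        exact this
      have v2 : eVariationOn c' (Icc (1/2) 1) = eVariationOn q' (Icc 0 1) := by
        rw [eVariationOn.eq_of_eqOn eq2,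
          evar_mul_right' hright (fun t => q' (2 * t - 1)) (p 1) (Icc (1/2) 1)]
        have := eVariationOn.comp_eq_of_monotoneOn q' (fun t : ℝ => 2 * t - 1)
          (fun a _ b _ hab => by dsimp; linarith :
            MonotoneOn (fun t : ℝ => 2 * t - 1) (Icc (1/2) 1))
        rw [himg2] at this
        exact this
      rw [v1, v2]
    calc amplitude c ≤ eVariationOn c' (Icc 0 1) := by
          apply iInf_le_of_le c'
          apply iInf_le_of_le hc'cont
          apply iInf_le_of_le hc'0
          apply iInf_le_of_le hc'1
          apply iInf_le_of_le hhtpy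
          exact le_rfl
      _ ≤ _ := hvar
  -- conclude by taking infima
  have hrw : amplitude p + amplitude q =
      ⨅ (q' : ℝ → G) (_ : ContinuousOn q' (Set.Icc 0 1)) (_ : q' 0 = q 0) (_ : q' 1 = q 1)
        (_ : HomotopicRelEndpoints q q') (p' : ℝ → G) (_ : ContinuousOn p' (Set.Icc 0 1))
        (_ : p' 0 = p 0) (_ : p' 1 = p 1) (_ : HomotopicRelEndpoints p p'),
        (eVariationOn p' (Set.Icc 0 1) + eVariationOn q' (Set.Icc 0 1)) := by
    simp only [amplitude, ENNReal.iInf_add, ENNReal.add_iInf]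
  rw [hrw]
  exact le_iInf fun q' => le_iInf fun k1 => le_iInf fun k2 => le_iInf fun k3 =>
    le_iInf fun k4 => le_iInf fun p' => le_iInf fun h1 => le_iInf fun h2 =>
    le_iInf fun h3 => le_iInf fun h4 => key p' h1 h2 h3 h4 q' k1 k2 k3 k4
end

section
/- Let G be a topological group equipped with a bi-invariant metric, i.e. dist(g·a, g·b) = dist(a, b) = dist(a·g, b·g) for all a, b, g ∈ G. Let g, h : [0,1] → G be continuous paths with g(0) = h(0) = 1. Define the path c : [0,1] → G by c(t) = h(1−3t)·h(1)⁻¹ for t ∈ [0, 1/3], c(t) = g(3t−1)·h(1)⁻¹ for t ∈ [1/3, 2/3], and c(t) = h(3t−2)·g(1)·h(1)⁻¹ for t ∈ [2/3, 1]. Then A(c) = A(g). -/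
open Set
open scoped ENNReal

lemma amplitude_le_aux {G : Type*} [MetricSpace G] {p q : ℝ → G}
    (hq : ContinuousOn q (Set.Icc 0 1)) (h0 : q 0 = p 0) (h1 : q 1 = p 1)
    (hh : HomotopicRelEndpoints p q) : amplitude p ≤ eVariationOn q (Set.Icc 0 1) := by
  exact iInf_le_of_le q (iInf_le_of_le hq (iInf_le_of_le h0 (iInf_le_of_le h1
    (iInf_le_of_le hh le_rfl))))

/-- In a topological group `G` with a bi-invariant metric, the amplitude of the
conjugated path `c` (going backwards along `h`, then along `g`, then along `h`, all right
translated by `h(1)⁻¹`) equals the amplitude of `g`. -/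
theorem amplitude_conjugate_eq
    {G : Type*} [Group G] [MetricSpace G] [IsTopologicalGroup G]
    (hleft : ∀ a b g : G, dist (g * a) (g * b) = dist a b)
    (hright : ∀ a b g : G, dist (a * g) (b * g) = dist a b)
    (g h : ℝ → G)
    (hg : ContinuousOn g (Set.Icc 0 1)) (hh : ContinuousOn h (Set.Icc 0 1))
    (hg0 : g 0 = 1) (hh0 : h 0 = 1)
    (c : ℝ → G)
    (hc₁ : ∀ t ∈ Set.Icc (0:ℝ) (1/3), c t = h (1 - 3 * t) * (h 1)⁻¹)
    (hc₂ : ∀ t ∈ Set.Icc (1/3 : ℝ) (2/3), c t = g (3 * t - 1) * (h 1)⁻¹)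
    (hc₃ : ∀ t ∈ Set.Icc (2/3 : ℝ) 1, c t = h (3 * t - 2) * g 1 * (h 1)⁻¹) :
    amplitude c = amplitude g := by
  classical
  -- the clamp to [0,1]
  set cl : ℝ → ℝ := fun u => max 0 (min 1 u) with hcl_def
  have hcl_cont : Continuous cl := by fun_prop
  have hcl_mem : ∀ u, cl u ∈ Icc (0:ℝ) 1 :=
    fun u => ⟨le_max_left _ _, max_le zero_le_one (min_le_left _ _)⟩
  have hcl_id : ∀ u ∈ Icc (0:ℝ) 1, cl u = u := by
    intro u hu
    simp only [hcl_def]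
    rw [min_eq_right hu.2, max_eq_right hu.1]
  have hcl0 : cl 0 = 0 := hcl_id 0 ⟨le_rfl, zero_le_one⟩
  have hcl1 : cl 1 = 1 := hcl_id 1 ⟨zero_le_one, le_rfl⟩
  have hclcl : ∀ u, cl (cl u) = cl u := fun u => hcl_id _ (hcl_mem u)
  -- clamped versions of g and h
  set h' : ℝ → G := fun u => h (cl u) with hh'_def
  set g' : ℝ → G := fun u => g (cl u) with hg'_def
  have hh'c : Continuous h' := hh.comp_continuous hcl_cont hcl_mem
  have hg'c : Continuous g' := hg.comp_continuous hcl_cont hcl_mem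
  have hh'_eq : ∀ u ∈ Icc (0:ℝ) 1, h' u = h u := fun u hu => by
    simp only [hh'_def, hcl_id u hu]
  have hg'_eq : ∀ u ∈ Icc (0:ℝ) 1, g' u = g u := fun u hu => by
    simp only [hg'_def, hcl_id u hu]
  -- conjugation by h 1 and its inverse
  set φ : G → G := fun x => h 1 * x * (h 1)⁻¹ with hφ_def
  set ψ : G → G := fun x => (h 1)⁻¹ * x * h 1 with hψ_def
  have hφψ : ∀ x, φ (ψ x) = x := fun x => by
    simp only [hφ_def, hψ_def]; group
  have hψφ : ∀ x, ψ (φ x) = x := fun x => by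
    simp only [hφ_def, hψ_def]; group
  have hφ_cont : Continuous φ := by
    simp only [hφ_def]; fun_prop
  have hψ_cont : Continuous ψ := by
    simp only [hψ_def]; fun_prop
  have hφ_dist : ∀ a b, dist (φ a) (φ b) = dist a b := by
    intro a b; simp only [hφ_def]; rw [hright, hleft]
  have hψ_dist : ∀ a b, dist (ψ a) (ψ b) = dist a b := by
    intro a b; simp only [hψ_def]; rw [hright, hleft]
  have hφ_one : φ 1 = 1 := by simp [hφ_def]
  have hψ_one : ψ 1 = 1 := by simp [hψ_def]
  -- eVariation is preserved by isometries
  have hlip : ∀ (u : G → G), (∀ a b, dist (u a) (u b) = dist a b) →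
      ∀ (q : ℝ → G), eVariationOn (u ∘ q) (Icc 0 1) ≤ eVariationOn q (Icc 0 1) := by
    intro u hu q
    have hl : LipschitzWith 1 u :=
      LipschitzWith.of_dist_le_mul (fun a b => by rw [hu]; simp)
    have := (hl.lipschitzOnWith (s := univ)).comp_eVariationOn_le
      (mapsTo_univ q (Icc 0 1))
    simpa using this
  have hvarφ : ∀ q : ℝ → G, eVariationOn (φ ∘ q) (Icc 0 1) = eVariationOn q (Icc 0 1) := by
    intro q
    refine le_antisymm (hlip φ hφ_dist q) ?_
    have := hlip ψ hψ_dist (φ ∘ q)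
    have he : ψ ∘ (φ ∘ q) = q := by funext t; simp [Function.comp, hψφ]
    rwa [he] at this
  have hvarψ : ∀ q : ℝ → G, eVariationOn (ψ ∘ q) (Icc 0 1) = eVariationOn q (Icc 0 1) := by
    intro q
    refine le_antisymm (hlip ψ hψ_dist q) ?_
    have := hlip φ hφ_dist (ψ ∘ q)
    have he : φ ∘ (ψ ∘ q) = q := by funext t; simp [Function.comp, hφψ]
    rwa [he] at this
  -- values of c at the endpoints
  have hc0 : c 0 = 1 := by
    have := hc₁ 0 ⟨le_rfl, by norm_num⟩
    simpa using this
  have hc1 : c 1 = h 1 * g 1 * (h 1)⁻¹ := by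
    have := hc₃ 1 ⟨by norm_num, le_rfl⟩
    norm_num at this
    exact this
  -- The basic homotopy from c to φ ∘ g
  set H : ℝ × ℝ → G := fun x =>
    if 3 * cl x.2 + cl x.1 ≤ 1 then h' (1 - 3 * cl x.2) * (h 1)⁻¹
    else if 3 * cl x.2 ≤ 2 + cl x.1 then
      h' x.1 * g' ((3 * cl x.2 - 1 + cl x.1) / (1 + 2 * cl x.1)) * (h 1)⁻¹
    else h' (3 * cl x.2 - 2) * g 1 * (h 1)⁻¹ with hH_def
  have hden_pos : ∀ u : ℝ, (0:ℝ) < 1 + 2 * cl u := by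
    intro u; have := (hcl_mem u).1; linarith
  have hc1' : Continuous fun x : ℝ × ℝ => cl x.1 := hcl_cont.comp continuous_fst
  have hc2' : Continuous fun x : ℝ × ℝ => cl x.2 := hcl_cont.comp continuous_snd
  have hH_cont : Continuous H := by
    rw [hH_def]
    apply Continuous.if_le
    · exact (hh'c.comp (continuous_const.sub (continuous_const.mul hc2'))).mul continuous_const
    · apply Continuous.if_le
      · refine ((hh'c.comp continuous_fst).mul (hg'c.comp ?_)).mul continuous_const
        exact Continuous.div
          (((continuous_const.mul hc2').sub continuous_const).add hc1')
          (continuous_const.add (continuous_const.mul hc1'))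
          (fun x => ne_of_gt (hden_pos x.1))
      · exact ((hh'c.comp ((continuous_const.mul hc2').sub continuous_const)).mul
          continuous_const).mul continuous_const
      · exact continuous_const.mul hc2'
      · exact continuous_const.add hc1'
      · -- boundary 3 * cl t = 2 + cl s
        intro x hx
        have hne : (1 + 2 * cl x.1 : ℝ) ≠ 0 := ne_of_gt (hden_pos x.1)
        have harg : (3 * cl x.2 - 1 + cl x.1) / (1 + 2 * cl x.1) = 1 := by
          rw [div_eq_one_iff_eq hne]; linarith
        rw [harg]
        have hg'1 : g' 1 = g 1 := by simp only [hg'_def, hcl1]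
        have : h' (3 * cl x.2 - 2) = h' x.1 := by
          simp only [hh'_def]
          congr 1
          have : 3 * cl x.2 - 2 = cl x.1 := by linarith [hx]
          rw [this, hclcl]
        rw [hg'1, this]
    · exact (continuous_const.mul hc2').add hc1'
    · exact continuous_const
    · -- boundary 3 * cl t + cl s = 1
      intro x hx
      have hcond : 3 * cl x.2 ≤ 2 + cl x.1 := by
        have := (hcl_mem x.1).1; linarith
      rw [if_pos hcond]
      have harg : (3 * cl x.2 - 1 + cl x.1) / (1 + 2 * cl x.1) = 0 := by
        rw [div_eq_zero_iff]; left; linarith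
      rw [harg]
      have hg'0 : g' 0 = 1 := by simp only [hg'_def, hcl0]; exact hg0
      rw [hg'0, mul_one]
      congr 1
      simp only [hh'_def]
      have : 1 - 3 * cl x.2 = cl x.1 := by linarith
      rw [this, hclcl]
  -- evaluations of H
  have hH0 : ∀ t, H (0, t) = c (cl t) := by
    intro t
    have hm := hcl_mem t
    simp only [hH_def, hcl0, mul_zero, add_zero, div_one]
    rcases le_or_gt (3 * cl t) 1 with h1' | h1'
    · rw [if_pos h1']
      rw [hc₁ (cl t) ⟨hm.1, by linarith⟩]
      congr 1
      exact hh'_eq _ ⟨by linarith, by linarith [hm.1]⟩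
    · rw [if_neg (by linarith)]
      rcases le_or_gt (3 * cl t) 2 with h2' | h2'
      · rw [if_pos (by linarith)]
        rw [hc₂ (cl t) ⟨by linarith, by linarith⟩]
        have e1 : h' (0:ℝ) = 1 := by simp only [hh'_def, hcl0]; exact hh0
        rw [e1, one_mul]
        congr 1
        exact hg'_eq _ ⟨by linarith, by linarith⟩
      · rw [if_neg (by linarith)]
        rw [hc₃ (cl t) ⟨by linarith, hm.2⟩]
        congr 2
        exact hh'_eq _ ⟨by linarith, by linarith [hm.2]⟩
  have hH1 : ∀ t, H (1, t) = φ (g (cl t)) := by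
    intro t
    have hm := hcl_mem t
    simp only [hH_def, hcl1]
    rcases le_or_gt (3 * cl t + 1) 1 with h1' | h1'
    · have hct : cl t = 0 := le_antisymm (by linarith) hm.1
      rw [if_pos (by rw [hct]; norm_num)]
      simp only [hct, mul_zero, sub_zero]
      have : h' (1:ℝ) = h 1 := by simp only [hh'_def, hcl1]
      rw [this, hφ_def]
      simp [hg0]
    · rw [if_neg (by linarith), if_pos (by linarith [hm.2])]
      have e1 : h' (1:ℝ) = h 1 := by simp only [hh'_def, hcl1]
      have e2 : (3 * cl t - 1 + 1) / (1 + 2 * 1) = cl t := by field_simp; ring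
      rw [e1, e2, hφ_def]
      congr 2
      simp only [hg'_def, hclcl]
  have hHs0 : ∀ s, H (s, 0) = 1 := by
    intro s
    simp only [hH_def, hcl0, mul_zero, zero_add, sub_zero]
    rw [if_pos (hcl_mem s).2]
    have : h' (1 : ℝ) = h 1 := by simp only [hh'_def, hcl1]
    rw [this]
    group
  have hHs1 : ∀ s, H (s, 1) = h 1 * g 1 * (h 1)⁻¹ := by
    intro s
    have hm := (hcl_mem s)
    simp only [hH_def, hcl1, mul_one]
    rw [if_neg (by linarith [hm.1])]
    rcases le_or_gt (3:ℝ) (2 + cl s) with h2' | h2'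
    · have hcs : cl s = 1 := le_antisymm hm.2 (by linarith)
      rw [if_pos (by linarith)]
      have e1 : h' s = h 1 := by simp only [hh'_def]; rw [show cl s = 1 from hcs]
      have e2 : (3 - 1 + cl s) / (1 + 2 * cl s) = 1 := by rw [hcs]; norm_num
      rw [e1, e2]
      congr 2
      simp only [hg'_def, hcl1]
    · rw [if_neg (by linarith)]
      congr 2
      norm_num [hh'_def, hcl1]
  -- transporting a homotopy g ~ q to a homotopy c ~ φ ∘ q
  have key1 : ∀ q : ℝ → G, HomotopicRelEndpoints g q → HomotopicRelEndpoints c (φ ∘ q) := by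
    rintro q ⟨Hq, hHqc, hHq0, hHq1, hHqs0, hHqs1⟩
    refine ⟨fun x => if 2 * x.1 ≤ 1 then H (2 * x.1, x.2)
      else φ (Hq (cl (2 * x.1 - 1), cl x.2)), ?_, ?_, ?_, ?_, ?_⟩
    · apply Continuous.continuousOn
      apply Continuous.if_le
      · exact hH_cont.comp (by fun_prop)
      · refine hφ_cont.comp (hHqc.comp_continuous (by fun_prop) ?_)
        exact fun x => ⟨hcl_mem _, hcl_mem _⟩
      · fun_prop
      · fun_prop
      · intro x hx
        have e1 : cl (2 * x.1 - 1) = 0 := by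
          rw [show (2:ℝ) * x.1 - 1 = 0 by linarith, hcl0]
        rw [e1, hx, hH1, hHq0 (cl x.2) (hcl_mem _)]
    · intro t ht
      simp only
      rw [if_pos (by norm_num), mul_zero, hH0, hcl_id t ht]
    · intro t ht
      simp only
      rw [if_neg (by norm_num)]
      have e1 : cl (2 * 1 - 1) = 1 := by norm_num [hcl1]
      rw [e1, hcl_id t ht, hHq1 t ht]
      rfl
    · intro s hs
      simp only
      split_ifs with hcase
      · rw [hHs0, hc0]
      · rw [hcl0, hHqs0 _ (hcl_mem _), hg0, hφ_one, hc0]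
    · intro s hs
      simp only
      split_ifs with hcase
      · rw [hHs1, hc1]
      · rw [hcl1, hHqs1 _ (hcl_mem _), hc1]
  -- transporting a homotopy c ~ q' to a homotopy g ~ ψ ∘ q'
  have key2 : ∀ q' : ℝ → G, HomotopicRelEndpoints c q' → HomotopicRelEndpoints g (ψ ∘ q') := by
    rintro q' ⟨H', hH'c, hH'0, hH'1, hH's0, hH's1⟩
    refine ⟨fun x => if 2 * x.1 ≤ 1 then ψ (H (1 - 2 * x.1, x.2))
      else ψ (H' (cl (2 * x.1 - 1), cl x.2)), ?_, ?_, ?_, ?_, ?_⟩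
    · apply Continuous.continuousOn
      apply Continuous.if_le
      · exact hψ_cont.comp (hH_cont.comp (by fun_prop))
      · refine hψ_cont.comp (hH'c.comp_continuous (by fun_prop) ?_)
        exact fun x => ⟨hcl_mem _, hcl_mem _⟩
      · fun_prop
      · fun_prop
      · intro x hx
        have e0 : (1 : ℝ) - 2 * x.1 = 0 := by linarith [hx]
        have e1 : cl (2 * x.1 - 1) = 0 := by
          rw [show 2 * x.1 - 1 = (0:ℝ) by linarith [hx], hcl0]
        rw [e0, e1, hH0, hH'0 (cl x.2) (hcl_mem _)]
    · intro t ht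
      simp only
      rw [if_pos (by norm_num), mul_zero, sub_zero, hH1, hψφ, hcl_id t ht]
    · intro t ht
      simp only
      rw [if_neg (by norm_num)]
      have e1 : cl (2 * 1 - 1) = 1 := by norm_num [hcl1]
      rw [e1, hcl_id t ht, hH'1 t ht]
      rfl
    · intro s hs
      simp only
      split_ifs with hcase
      · rw [hHs0, hψ_one, hg0]
      · rw [hcl0, hH's0 _ (hcl_mem _), hc0, hψ_one, hg0]
    · intro s hs
      simp only
      split_ifs with hcase
      · rw [hHs1]
        simp only [hψ_def]
        group
      · rw [hcl1, hH's1 _ (hcl_mem _), hc1]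
        simp only [hψ_def]
        group
  -- conclusion
  apply le_antisymm
  · simp only [amplitude, le_iInf_iff]
    intro q hq hq0 hq1 hqhom
    calc amplitude c ≤ eVariationOn (φ ∘ q) (Icc 0 1) := by
          apply amplitude_le_aux
          · exact hφ_cont.comp_continuousOn hq
          · show φ (q 0) = c 0
            rw [hq0, hg0, hφ_one, hc0]
          · show φ (q 1) = c 1
            rw [hq1, hc1]
          · exact key1 q hqhom
      _ = eVariationOn q (Icc 0 1) := hvarφ q
  · simp only [amplitude, le_iInf_iff]
    intro q' hq' hq'0 hq'1 hq'hom
    calc amplitude g ≤ eVariationOn (ψ ∘ q') (Icc 0 1) := by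
          apply amplitude_le_aux
          · exact hψ_cont.comp_continuousOn hq'
          · show ψ (q' 0) = g 0
            rw [hq'0, hc0, hψ_one, hg0]
          · show ψ (q' 1) = g 1
            rw [hq'1, hc1]
            simp only [hψ_def]; group
          · exact key2 q' hq'hom
      _ = eVariationOn q' (Icc 0 1) := hvarψ q'
end

section
/- Let n ≥ 1, R > 0, and let ω : B_R → (ℝ² →ₗ[ℝ] Matrix n n ℂ) be a C² connection form with curvature Ω, satisfying the axial gauge condition ω((s,0))[e₁] = 0 for all s ∈ (0,R), where e₁ = (1,0). For r ∈ (0,R) let g_r : [0,1] → Matrix n n ℂ be the parallel transport along the circle of radius r. Then for every r ∈ (0,R), d/dr g_r(1) = 2πr ∫₀¹ g_r(1)·g_r(t)⁻¹·Ω(r e^{2πit})[i e^{2πit}, e^{2πit}]·g_r(t) dt. -/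
open MeasureTheory Set
open scoped ENNReal Matrix Real

attribute [local instance] Matrix.frobeniusNormedAddCommGroup Matrix.frobeniusNormedSpace

noncomputable instance (n : ℕ) : NormedAddCommGroup (ℂ →L[ℝ] Matrix (Fin n) (Fin n) ℂ) :=
  ContinuousLinearMap.toNormedAddCommGroup

noncomputable instance (n : ℕ) : NormedSpace ℝ (ℂ →L[ℝ] Matrix (Fin n) (Fin n) ℂ) :=
  ContinuousLinearMap.toNormedSpace

/-- The curvature `Ω(x)[u,v]` of a connection form `ω` on the plane `ℝ² ≃ ℂ`. -/
noncomputable def curvature {n : ℕ}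
    (ω : ℂ → (ℂ →L[ℝ] Matrix (Fin n) (Fin n) ℂ)) (x u v : ℂ) : Matrix (Fin n) (Fin n) ℂ :=
  fderiv ℝ ω x u v - fderiv ℝ ω x v u + ω x u * ω x v - ω x v * ω x u

/-- The point `e^{2πit} = (cos 2πt, sin 2πt)` of the unit circle, `ℝ²` being identified
with `ℂ`. -/
noncomputable def e2πi (t : ℝ) : ℂ := Complex.exp (2 * Real.pi * Complex.I * t)

section Aux
open Filter Topology
set_option maxHeartbeats 1000000

attribute [local instance] Matrix.frobeniusNormedRing Matrix.frobeniusNormedAlgebra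
attribute [-instance] instTopologicalSpaceMatrix Matrix.instUniformSpace

/-- Gronwall wrapper on `[0, b]`. -/
lemma gron_aux {E : Type*} [NormedAddCommGroup E] [NormedSpace ℝ E]
    {f f' : ℝ → E} {K eps delta b : ℝ}
    (hf : ∀ t ∈ Icc (0:ℝ) b, HasDerivWithinAt f (f' t) (Icc 0 b) t)
    (bound : ∀ t ∈ Icc (0:ℝ) b, ‖f' t‖ ≤ K * ‖f t‖ + eps)
    (h0 : ‖f 0‖ ≤ delta) :
    ∀ t ∈ Icc (0:ℝ) b, ‖f t‖ ≤ gronwallBound delta K eps t := by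
  intro t ht
  have hcont : ContinuousOn f (Icc 0 b) := fun x hx => (hf x hx).continuousWithinAt
  have H := norm_le_gronwallBound_of_norm_deriv_right_le (f' := f') hcont
    (fun x hx => (hf x (Ico_subset_Icc_self hx)).mono_of_mem_nhdsWithin (Icc_mem_nhdsGE_of_mem hx))
    h0 (fun x hx => bound x (Ico_subset_Icc_self hx)) t ht
  simpa using H

universe u
variable {n : ℕ}

local notation "M" => Matrix (Fin n) (Fin n) ℂ

/-- Solutions of linear matrix ODEs with invertible initial value stay invertible. -/
lemma isUnit_of_ode {A gg : ℝ → M} {K : ℝ} (hK : 0 ≤ K)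
    (hg' : ∀ t ∈ Icc (0:ℝ) 1, HasDerivWithinAt gg (A t * gg t) (Icc 0 1) t)
    (hA : ∀ t ∈ Icc (0:ℝ) 1, ‖A t‖ ≤ K)
    (hg0 : gg 0 = 1) : ∀ t ∈ Icc (0:ℝ) 1, IsUnit (gg t) := by
  intro t₀ ht₀
  by_contra hni
  rw [Matrix.isUnit_iff_isUnit_det, isUnit_iff_ne_zero, not_ne_iff] at hni
  obtain ⟨v, hv, hv0⟩ := (Matrix.exists_mulVec_eq_zero_iff).2 hni
  obtain ⟨i, hvi⟩ : ∃ i, v i ≠ 0 := by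
    by_contra h
    push_neg at h
    exact hv (funext h)
  set C : M := Matrix.of (fun i _ => v i) with hC
  have hgC : gg t₀ * C = 0 := by
    ext i j
    simpa [Matrix.mul_apply, Matrix.mulVec, dotProduct, hC] using congrFun hv0 i
  set w : ℝ → M := fun τ => gg (t₀ - τ) * C with hw
  have hmap : MapsTo (fun τ => t₀ - τ) (Icc 0 t₀) (Icc 0 1) := by
    intro τ hτ
    simp only [mem_Icc] at hτ ⊢
    exact ⟨by linarith, by linarith [ht₀.2]⟩
  have hw' : ∀ τ ∈ Icc (0:ℝ) t₀,
      HasDerivWithinAt w ((-1:ℝ) • (A (t₀ - τ) * w τ)) (Icc 0 t₀) τ := by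
    intro τ hτ
    have hφ : HasDerivWithinAt (fun τ : ℝ => t₀ - τ) (-1) (Icc 0 t₀) τ := by
      simpa using ((hasDerivAt_id τ).const_sub t₀).hasDerivWithinAt
    have hcomp := (hg' (t₀ - τ) (hmap hτ)).scomp τ hφ hmap
    have := hcomp.mul_const C
    convert (preTransparency := .default) this using 1
    simp [hw, smul_mul_assoc, mul_assoc]
  have hbound : ∀ τ ∈ Icc (0:ℝ) t₀, ‖(-1:ℝ) • (A (t₀ - τ) * w τ)‖ ≤ K * ‖w τ‖ + 0 := by
    intro τ hτ
    rw [norm_smul]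
    simp only [norm_neg, norm_one, one_mul, add_zero]
    calc ‖A (t₀ - τ) * w τ‖ ≤ ‖A (t₀ - τ)‖ * ‖w τ‖ := norm_mul_le _ _
      _ ≤ K * ‖w τ‖ := by
          exact mul_le_mul_of_nonneg_right (hA _ (hmap hτ)) (norm_nonneg _)
  have h0 : ‖w 0‖ ≤ 0 := by simp [hw, hgC]
  have := gron_aux hw' hbound h0 t₀ ⟨ht₀.1, le_refl _⟩
  rw [gronwallBound_ε0_δ0] at this
  have hwt : w t₀ = 0 := by
    have := norm_le_zero_iff.mp this
    exact this
  have hC0 : C = 0 := by simpa [hw, hg0] using hwt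
  exact hvi (by simpa [hC] using congrFun (congrFun hC0 i) i)

/-- Derivative of the pointwise inverse of a path of invertible matrices. -/
lemma hasDerivWithinAt_inv_path {gg : ℝ → M} {D : M} {s : Set ℝ} {t : ℝ}
    (h : HasDerivWithinAt gg D s t) (hu : IsUnit (gg t)) :
    HasDerivWithinAt (fun τ => (gg τ)⁻¹) (-((gg t)⁻¹ * D * (gg t)⁻¹)) s t := by
  have h1 : HasFDerivAt Ring.inverse
      (-ContinuousLinearMap.mulLeftRight ℝ M ↑hu.unit⁻¹ ↑hu.unit⁻¹) (gg t) := by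
    simpa [hu.unit_spec] using hasFDerivAt_ringInverse (𝕜 := ℝ) hu.unit
  have h2 := h1.comp_hasDerivWithinAt t h
  have h3 : (fun τ => (gg τ)⁻¹) = fun τ => Ring.inverse (gg τ) := by
    funext τ; rw [Matrix.nonsing_inv_eq_ringInverse]
  rw [h3]
  convert (preTransparency := .default) h2 using 1
  rw [ContinuousLinearMap.neg_apply, ContinuousLinearMap.mulLeftRight_apply,
    Matrix.coe_units_inv, hu.unit_spec]


lemma hasDerivAt_e2πi (t : ℝ) :
    HasDerivAt e2πi ((2 * π * Complex.I) * e2πi t) t := by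
  have h1 : HasDerivAt (fun t : ℝ => 2 * π * Complex.I * t) (2 * π * Complex.I) t := by
    simpa using (Complex.ofRealCLM.hasDerivAt (x := t)).const_mul (2 * π * Complex.I)
  have h2 := h1.cexp
  have he : e2πi = fun t : ℝ => Complex.exp (2 * π * Complex.I * t) := rfl
  rw [he]
  convert h2 using 1
  rw [mul_comm]

lemma continuous_e2πi : Continuous e2πi := by
  have : Continuous fun t : ℝ => 2 * π * Complex.I * t := by continuity
  exact Complex.continuous_exp.comp this

lemma abs_e2πi (t : ℝ) : ‖e2πi t‖ = 1 := by
  rw [e2πi, Complex.norm_exp]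
  norm_num [Complex.mul_re, Complex.mul_im]

lemma e2πi_zero : e2πi 0 = 1 := by simp [e2πi]

lemma e2πi_one : e2πi 1 = 1 := by
  rw [e2πi]
  norm_num [Complex.exp_two_pi_mul_I]

lemma gronwallBound_le_aux {K eps t : ℝ} (hK : 1 ≤ K) (heps : 0 ≤ eps) (ht : t ∈ Icc (0:ℝ) 1) :
    gronwallBound 0 K eps t ≤ eps * Real.exp K := by
  rw [gronwallBound_of_K_ne_0 (by linarith : K ≠ 0)]
  have h0t : 0 ≤ K * t := mul_nonneg (by linarith) ht.1
  have e1 : 1 ≤ Real.exp (K * t) := Real.one_le_exp h0t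
  have e2 : Real.exp (K * t) ≤ Real.exp K := Real.exp_le_exp.2 (by nlinarith [ht.2])
  have hd : eps / K ≤ eps := div_le_self heps hK
  calc (0:ℝ) * Real.exp (K * t) + eps / K * (Real.exp (K * t) - 1)
      = eps / K * (Real.exp (K * t) - 1) := by ring
    _ ≤ eps * (Real.exp (K * t) - 1) := mul_le_mul_of_nonneg_right hd (by linarith)
    _ ≤ eps * Real.exp K := mul_le_mul_of_nonneg_left (by linarith) heps

lemma main_aux
    (n : ℕ) (R : ℝ) (hR : 0 < R)
    (ω : ℂ → (ℂ →L[ℝ] Matrix (Fin n) (Fin n) ℂ))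
    (hω : ContDiffOn ℝ 2 ω (Metric.ball (0:ℂ) R))
    (haxial : ∀ s ∈ Set.Ioo (0:ℝ) R, ω (s : ℂ) 1 = 0)
    (g : ℝ → ℝ → Matrix (Fin n) (Fin n) ℂ)
    (hg0 : ∀ r ∈ Set.Ioo (0:ℝ) R, g r 0 = 1)
    (hg : ∀ r ∈ Set.Ioo (0:ℝ) R, ∀ t ∈ Set.Icc (0:ℝ) 1,
      HasDerivWithinAt (g r)
        (-((2 * π * r) • (ω (r * e2πi t) (Complex.I * e2πi t) * g r t))) (Set.Icc 0 1) t)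
    (r : ℝ) (hr : r ∈ Set.Ioo (0:ℝ) R) :
    HasDerivAt (fun ρ => g ρ 1)
      ((2 * π * r) • ∫ t in (0:ℝ)..1,
        g r 1 * (g r t)⁻¹ *
          curvature ω (r * e2πi t) (Complex.I * e2πi t) (e2πi t) * g r t) r := by
  obtain ⟨hr0, hrR⟩ := hr
  have hrIoo : r ∈ Ioo (0:ℝ) R := ⟨hr0, hrR⟩
  -- the window of radii
  set δ : ℝ := min (r/2) ((R - r)/2) with hδdef
  have hδpos : 0 < δ := lt_min (by linarith) (by linarith)
  have hδ1 : δ ≤ r/2 := min_le_left _ _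
  have hδ2 : δ ≤ (R - r)/2 := min_le_right _ _
  have hJsub : Icc (r - δ) (r + δ) ⊆ Ioo 0 R := fun s hs => ⟨by linarith [hs.1], by linarith [hs.2]⟩
  have hrJ : r ∈ Icc (r - δ) (r + δ) := ⟨by linarith, by linarith⟩
  -- the curvature along the circle of radius r
  set Ω : ℝ → Matrix (Fin n) (Fin n) ℂ :=
    fun t => curvature ω (r * e2πi t) (Complex.I * e2πi t) (e2πi t) with hΩdef
  -- circle points lie in the ball
  have hmem : ∀ s ∈ Ioo (0:ℝ) R, ∀ t : ℝ, (s : ℂ) * e2πi t ∈ Metric.ball (0:ℂ) R := by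
    intro s hs t
    simp only [Metric.mem_ball, dist_zero_right, norm_mul, abs_e2πi,
      mul_one, Complex.norm_real, Real.norm_eq_abs]
    rw [abs_of_pos hs.1]; exact hs.2
  -- differentiability and continuity of ω
  have hball : IsOpen (Metric.ball (0:ℂ) R) := Metric.isOpen_ball
  have hωd : ∀ x ∈ Metric.ball (0:ℂ) R, HasFDerivAt ω (fderiv ℝ ω x) x := fun x hx =>
    ((hω.contDiffAt (hball.mem_nhds hx)).differentiableAt (by norm_num)).hasFDerivAt
  have hωc : ContinuousOn ω (Metric.ball (0:ℂ) R) := hω.continuousOn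
  have hDωc : ContinuousOn (fderiv ℝ ω) (Metric.ball (0:ℂ) R) :=
    hω.continuousOn_fderiv_of_isOpen hball (by norm_num)
  -- the coefficient of the ODE and the rewritten ODE
  set A : ℝ → ℝ → Matrix (Fin n) (Fin n) ℂ :=
    fun s t => -((2 * π * s) • (ω (s * e2πi t) (Complex.I * e2πi t))) with hAdef
  have hgode : ∀ s ∈ Ioo (0:ℝ) R, ∀ t ∈ Icc (0:ℝ) 1,
      HasDerivWithinAt (g s) (A s t * g s t) (Icc 0 1) t := by
    intro s hs t ht
    have h := hg s hs t ht
    convert h using 1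
    simp [hAdef, smul_mul_assoc]
  have hgc : ∀ s ∈ Ioo (0:ℝ) R, ContinuousOn (g s) (Icc 0 1) := fun s hs t ht =>
    (hgode s hs t ht).continuousWithinAt
  -- continuity of A in both variables
  have hcirc : Continuous (fun p : ℝ × ℝ => (p.1 : ℂ) * e2πi p.2) :=
    (Complex.continuous_ofReal.comp continuous_fst).mul (continuous_e2πi.comp continuous_snd)
  have hmapsto : MapsTo (fun p : ℝ × ℝ => (p.1 : ℂ) * e2πi p.2)
      (Icc (r - δ) (r + δ) ×ˢ Icc (0:ℝ) 1) (Metric.ball (0:ℂ) R) := fun p hp =>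
    hmem p.1 (hJsub hp.1) p.2
  have hωA : ContinuousOn (fun p : ℝ × ℝ => ω ((p.1:ℂ) * e2πi p.2))
      (Icc (r - δ) (r + δ) ×ˢ Icc (0:ℝ) 1) := hωc.comp hcirc.continuousOn hmapsto
  have hie2 : Continuous (fun p : ℝ × ℝ => Complex.I * e2πi p.2) :=
    continuous_const.mul (continuous_e2πi.comp continuous_snd)
  have hAcont : ContinuousOn (fun p : ℝ × ℝ => A p.1 p.2)
      (Icc (r - δ) (r + δ) ×ˢ Icc (0:ℝ) 1) := by
    exact (((continuous_const.mul continuous_fst).continuousOn).smul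
      (hωA.clm_apply hie2.continuousOn)).neg
  obtain ⟨K₀, hK₀⟩ := (isCompact_Icc.prod isCompact_Icc).exists_bound_of_continuousOn hAcont
  set K : ℝ := max K₀ 1 with hKdef
  have hK1 : (1:ℝ) ≤ K := le_max_right _ _
  have hK0 : (0:ℝ) ≤ K := by linarith
  have hAbd : ∀ s ∈ Icc (r - δ) (r + δ), ∀ t ∈ Icc (0:ℝ) 1, ‖A s t‖ ≤ K := fun s hs t ht =>
    (hK₀ (s, t) ⟨hs, ht⟩).trans (le_max_left _ _)
  -- derivative of A in the radial direction
  set A' : ℝ → ℝ → Matrix (Fin n) (Fin n) ℂ := fun s t =>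
    -((2 * π) • (ω (s * e2πi t) (Complex.I * e2πi t))
      + (2 * π * s) • ((fderiv ℝ ω (s * e2πi t)) (e2πi t) (Complex.I * e2πi t))) with hA'def
  have hAs : ∀ s ∈ Ioo (0:ℝ) R, ∀ t : ℝ, HasDerivAt (fun σ => A σ t) (A' s t) s := by
    intro s hs t
    have h1 : HasDerivAt (fun σ : ℝ => (σ : ℂ) * e2πi t) (e2πi t) s := by
      simpa using (Complex.ofRealCLM.hasDerivAt (x := s)).mul_const (e2πi t)
    have h2 := (hωd _ (hmem s hs t)).comp_hasDerivAt s h1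
    have h3 := h2.clm_apply (hasDerivAt_const s (Complex.I * e2πi t))
    have h4 : HasDerivAt (fun σ : ℝ => 2 * π * σ) (2 * π) s := by
      simpa using (hasDerivAt_id s).const_mul (2 * π)
    have h5 := (h4.smul h3).neg
    convert (preTransparency := .default) h5 using 1
    simp [hA'def, add_comm]
  have hA'cont : ContinuousOn (fun p : ℝ × ℝ => A' p.1 p.2)
      (Icc (r - δ) (r + δ) ×ˢ Icc (0:ℝ) 1) := by
    have hDA : ContinuousOn
        (fun p : ℝ × ℝ => (fderiv ℝ ω ((p.1:ℂ) * e2πi p.2)) (e2πi p.2) (Complex.I * e2πi p.2))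
        (Icc (r - δ) (r + δ) ×ˢ Icc (0:ℝ) 1) :=
      ((hDωc.comp hcirc.continuousOn hmapsto).clm_apply
        (continuous_e2πi.comp continuous_snd).continuousOn).clm_apply hie2.continuousOn
    exact (((continuous_const (y := (2 * π))).continuousOn.smul (hωA.clm_apply hie2.continuousOn)).add
      ((((continuous_const (y := (2 * π))).mul continuous_fst).continuousOn).smul hDA)).neg
  obtain ⟨L₀, hL₀⟩ := (isCompact_Icc.prod isCompact_Icc).exists_bound_of_continuousOn hA'cont
  set L : ℝ := max L₀ 0 with hLdef
  have hL0 : (0:ℝ) ≤ L := le_max_right _ _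
  have hlip : ∀ ρ ∈ Icc (r - δ) (r + δ), ∀ t ∈ Icc (0:ℝ) 1,
      ‖A ρ t - A r t‖ ≤ L * |ρ - r| := by
    intro ρ hρ t ht
    have h := Convex.norm_image_sub_le_of_norm_hasDerivWithin_le
      (f := fun σ => A σ t) (f' := fun σ => A' σ t) (s := Icc (r - δ) (r + δ)) (C := L)
      (fun x hx => (hAs x (hJsub hx) t).hasDerivWithinAt)
      (fun x hx => (hL₀ (x, t) ⟨hx, ht⟩).trans (le_max_left _ _)) (convex_Icc _ _) hrJ hρ
    simpa [Real.norm_eq_abs] using h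
  -- continuity of A and A' in t for fixed s
  have hAtc : ∀ s ∈ Icc (r - δ) (r + δ), ContinuousOn (fun t => A s t) (Icc (0:ℝ) 1) := by
    intro s hs
    have hm : MapsTo (fun t : ℝ => (s:ℂ) * e2πi t) (Icc 0 1) (Metric.ball (0:ℂ) R) :=
      fun t _ => hmem s (hJsub hs) t
    exact (((hωc.comp ((continuous_const.mul continuous_e2πi).continuousOn) hm).clm_apply
      ((continuous_const.mul continuous_e2πi).continuousOn)).const_smul (2 * π * s)).neg
  have hA'tc : ∀ s ∈ Icc (r - δ) (r + δ), ContinuousOn (fun t => A' s t) (Icc (0:ℝ) 1) := by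
    intro s hs
    have hm : MapsTo (fun t : ℝ => (s:ℂ) * e2πi t) (Icc 0 1) (Metric.ball (0:ℂ) R) :=
      fun t _ => hmem s (hJsub hs) t
    refine ContinuousOn.neg (ContinuousOn.add ?_ ?_)
    · exact ((hωc.comp ((continuous_const.mul continuous_e2πi).continuousOn) hm).clm_apply
        ((continuous_const.mul continuous_e2πi).continuousOn)).const_smul (2 * π)
    · exact ((((hDωc.comp ((continuous_const.mul continuous_e2πi).continuousOn) hm).clm_apply
        continuous_e2πi.continuousOn)).clm_apply
        ((continuous_const.mul continuous_e2πi).continuousOn)).const_smul (2 * π * s)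
  -- bound for g
  set Cg : ℝ := ‖(1 : Matrix (Fin n) (Fin n) ℂ)‖ * Real.exp K with hCgdef
  have hCg0 : 0 ≤ Cg := mul_nonneg (norm_nonneg _) (Real.exp_pos _).le
  have hgbd : ∀ s ∈ Icc (r - δ) (r + δ), ∀ t ∈ Icc (0:ℝ) 1, ‖g s t‖ ≤ Cg := by
    intro s hs t ht
    have hsIoo := hJsub hs
    have hb : ∀ τ ∈ Icc (0:ℝ) 1, ‖A s τ * g s τ‖ ≤ K * ‖g s τ‖ + 0 := by
      intro τ hτ
      rw [add_zero]
      exact (norm_mul_le _ _).trans (mul_le_mul_of_nonneg_right (hAbd s hs τ hτ) (norm_nonneg _))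
    have h := gron_aux (hgode s hsIoo) hb (le_of_eq (by rw [hg0 s hsIoo])) t ht
    rw [gronwallBound_ε0] at h
    refine h.trans ?_
    rw [hCgdef]
    exact mul_le_mul_of_nonneg_left (Real.exp_le_exp.2 (by nlinarith [ht.1, ht.2]))
      (norm_nonneg _)
  -- difference bound for g
  set Cd : ℝ := L * Cg * Real.exp K with hCddef
  have hgdiff : ∀ ρ ∈ Icc (r - δ) (r + δ), ∀ t ∈ Icc (0:ℝ) 1,
      ‖g ρ t - g r t‖ ≤ Cd * |ρ - r| := by
    intro ρ hρ t ht
    have hρIoo := hJsub hρ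
    have hf : ∀ τ ∈ Icc (0:ℝ) 1, HasDerivWithinAt (fun τ => g ρ τ - g r τ)
        (A ρ τ * g ρ τ - A r τ * g r τ) (Icc 0 1) τ :=
      fun τ hτ => (hgode ρ hρIoo τ hτ).sub (hgode r hrIoo τ hτ)
    have hb : ∀ τ ∈ Icc (0:ℝ) 1,
        ‖A ρ τ * g ρ τ - A r τ * g r τ‖ ≤ K * ‖g ρ τ - g r τ‖ + (L * |ρ - r|) * Cg := by
      intro τ hτ
      have hsplit : A ρ τ * g ρ τ - A r τ * g r τ
          = A ρ τ * (g ρ τ - g r τ) + (A ρ τ - A r τ) * g r τ := by noncomm_ring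
      rw [hsplit]
      refine (norm_add_le _ _).trans (add_le_add ?_ ?_)
      · exact (norm_mul_le _ _).trans
          (mul_le_mul (hAbd ρ hρ τ hτ) le_rfl (norm_nonneg _) hK0)
      · exact (norm_mul_le _ _).trans
          (mul_le_mul (hlip ρ hρ τ hτ) (hgbd r hrJ τ hτ) (norm_nonneg _)
            (mul_nonneg hL0 (abs_nonneg _)))
    have h00 : ‖g ρ 0 - g r 0‖ ≤ 0 := by
      rw [hg0 ρ hρIoo, hg0 r hrIoo, sub_self, norm_zero]
    have h := gron_aux hf hb h00 t ht
    refine h.trans ?_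
    refine (gronwallBound_le_aux hK1
      (mul_nonneg (mul_nonneg hL0 (abs_nonneg _)) hCg0) ht).trans (le_of_eq ?_)
    rw [hCddef]; ring
  -- invertibility of g r t and the inverse path
  have hunit : ∀ t ∈ Icc (0:ℝ) 1, IsUnit (g r t) :=
    isUnit_of_ode hK0 (hgode r hrIoo) (fun t ht => hAbd r hrJ t ht) (hg0 r hrIoo)
  set P : ℝ → Matrix (Fin n) (Fin n) ℂ := fun t => (g r t)⁻¹ with hPdef
  have hginv : ∀ t ∈ Icc (0:ℝ) 1, g r t * P t = 1 := fun t ht =>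
    Matrix.mul_nonsing_inv _ ((Matrix.isUnit_iff_isUnit_det _).mp (hunit t ht))
  have hPode : ∀ t ∈ Icc (0:ℝ) 1, HasDerivWithinAt P (-(P t * A r t)) (Icc 0 1) t := by
    intro t ht
    have h := hasDerivWithinAt_inv_path (hgode r hrIoo t ht) (hunit t ht)
    convert h using 1
    rw [hPdef]
    have heq : (g r t)⁻¹ * (A r t * g r t) * (g r t)⁻¹ = (g r t)⁻¹ * A r t := by
      rw [← mul_assoc, mul_assoc _ (g r t) ((g r t)⁻¹), hginv t ht, mul_one]
    rw [heq]
  have hPc : ContinuousOn P (Icc 0 1) := fun t ht => (hPode t ht).continuousWithinAt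
  obtain ⟨CP, hCP⟩ := isCompact_Icc.exists_bound_of_continuousOn hPc
  have hCP0 : 0 ≤ CP := (norm_nonneg (P 0)).trans (hCP 0 ⟨le_refl _, zero_le_one⟩)
  -- Duhamel's formula
  have hduh : ∀ ρ ∈ Icc (r - δ) (r + δ), g ρ 1 - g r 1 =
      g r 1 * ∫ t in (0:ℝ)..1, P t * ((A ρ t - A r t) * g ρ t) := by
    intro ρ hρ
    have hρIoo := hJsub hρ
    have hφ' : ∀ t ∈ Icc (0:ℝ) 1, HasDerivWithinAt (fun t => P t * g ρ t)
        (P t * ((A ρ t - A r t) * g ρ t)) (Icc 0 1) t := by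
      intro t ht
      have h := (hPode t ht).mul (hgode ρ hρIoo t ht)
      convert (preTransparency := .default) h using 1
      noncomm_ring
    have hint : IntervalIntegrable (fun t => P t * ((A ρ t - A r t) * g ρ t)) volume 0 1 := by
      apply ContinuousOn.intervalIntegrable
      rw [uIcc_of_le zero_le_one]
      exact hPc.mul ((((hAtc ρ hρ).sub (hAtc r hrJ)).mul (hgc ρ hρIoo)))
    have hφc : ContinuousOn (fun t => P t * g ρ t) (Icc 0 1) := hPc.mul (hgc ρ hρIoo)
    have hFTC := intervalIntegral.integral_eq_sub_of_hasDeriv_right_of_le zero_le_one hφc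
      (fun t ht => ((hφ' t (Ioo_subset_Icc_self ht)).hasDerivAt
        (Icc_mem_nhds ht.1 ht.2)).hasDerivWithinAt) hint
    rw [hFTC]
    have hφ0 : P 0 * g ρ 0 = 1 := by
      rw [hg0 ρ hρIoo, hPdef]
      simp [hg0 r hrIoo]
    rw [hφ0, mul_sub, mul_one, ← mul_assoc, hginv 1 ⟨zero_le_one, le_refl 1⟩, one_mul]
  -- the derivative of the holonomy, in preliminary form
  set D : Matrix (Fin n) (Fin n) ℂ := ∫ t in (0:ℝ)..1, P t * (A' r t * g r t) with hDdef
  have hder : HasDerivAt (fun ρ => g ρ 1) (g r 1 * D) r := by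
    rw [hasDerivAt_iff_tendsto_slope]
    have hIccnhds : Icc (r - δ) (r + δ) ∈ 𝓝[≠] r :=
      nhdsWithin_le_nhds (Icc_mem_nhds (by linarith) (by linarith))
    have key : Tendsto
        (fun ρ => ∫ t in (0:ℝ)..1, (ρ - r)⁻¹ • (P t * ((A ρ t - A r t) * g ρ t)))
        (𝓝[≠] r) (𝓝 D) := by
      rw [hDdef]
      apply intervalIntegral.tendsto_integral_filter_of_dominated_convergence
        (bound := fun _ => CP * (L * Cg))
      · filter_upwards [hIccnhds] with ρ hρ
        apply ContinuousOn.aestronglyMeasurable ?_ measurableSet_uIoc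
        apply ContinuousOn.mono ?_
          (by rw [uIoc_of_le zero_le_one]; exact Ioc_subset_Icc_self : Set.uIoc (0:ℝ) 1 ⊆ Icc 0 1)
        exact (hPc.mul (((hAtc ρ hρ).sub (hAtc r hrJ)).mul (hgc ρ (hJsub hρ)))).const_smul ((ρ - r)⁻¹)
      · filter_upwards [hIccnhds, self_mem_nhdsWithin] with ρ hρ hρne
        apply ae_of_all
        intro t htI
        have ht : t ∈ Icc (0:ℝ) 1 := by
          rw [uIoc_of_le zero_le_one] at htI; exact Ioc_subset_Icc_self htI
        have hne : ρ - r ≠ 0 := sub_ne_zero.2 hρne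
        have h1 : ‖P t * ((A ρ t - A r t) * g ρ t)‖ ≤ CP * ((L * |ρ - r|) * Cg) := by
          refine (norm_mul_le _ _).trans ?_
          refine mul_le_mul (hCP t ht) ?_ (norm_nonneg _) hCP0
          refine (norm_mul_le _ _).trans ?_
          exact mul_le_mul (hlip ρ hρ t ht) (hgbd ρ hρ t ht) (norm_nonneg _)
            (mul_nonneg hL0 (abs_nonneg _))
        rw [norm_smul, Real.norm_eq_abs, abs_inv]
        calc |ρ - r|⁻¹ * ‖P t * ((A ρ t - A r t) * g ρ t)‖
            ≤ |ρ - r|⁻¹ * (CP * ((L * |ρ - r|) * Cg)) :=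
              mul_le_mul_of_nonneg_left h1 (by positivity)
          _ = CP * (L * Cg) := by
              have : |ρ - r| ≠ 0 := abs_ne_zero.2 hne
              field_simp
      · exact intervalIntegrable_const
      · apply ae_of_all
        intro t htI2
        have ht : t ∈ Icc (0:ℝ) 1 := by
          rw [uIoc_of_le zero_le_one] at htI2; exact Ioc_subset_Icc_self htI2
        have hslope : Tendsto (fun ρ => (ρ - r)⁻¹ • (A ρ t - A r t)) (𝓝[≠] r)
            (𝓝 (A' r t)) := by
          have h := hasDerivAt_iff_tendsto_slope.mp (hAs r hrIoo t)
          refine h.congr (fun ρ => ?_)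
          rw [slope_def_module]
        have hgt : Tendsto (fun ρ => g ρ t) (𝓝[≠] r) (𝓝 (g r t)) := by
          rw [← tendsto_sub_nhds_zero_iff]
          apply squeeze_zero_norm'
          · filter_upwards [hIccnhds] with ρ hρ
            exact hgdiff ρ hρ t ht
          · have h2 : Tendsto (fun ρ : ℝ => Cd * |ρ - r|) (𝓝 r) (𝓝 (Cd * |r - r|)) :=
              (continuous_const.mul ((continuous_id.sub continuous_const).abs)).tendsto r
            have h3 : Tendsto (fun ρ : ℝ => Cd * |ρ - r|) (𝓝[≠] r) (𝓝 (Cd * |r - r|)) :=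
              h2.mono_left nhdsWithin_le_nhds
            simpa using h3
        have hmul : Tendsto (fun ρ => P t * (((ρ - r)⁻¹ • (A ρ t - A r t)) * g ρ t))
            (𝓝[≠] r) (𝓝 (P t * (A' r t * g r t))) :=
          tendsto_const_nhds.mul (hslope.mul hgt)
        refine hmul.congr (fun ρ => ?_)
        rw [smul_mul_assoc, mul_smul_comm]
    have hmulkey := key.const_mul (g r 1)
    apply hmulkey.congr'
    filter_upwards [hIccnhds, self_mem_nhdsWithin] with ρ hρ hρne
    calc g r 1 * ∫ t in (0:ℝ)..1, (ρ - r)⁻¹ • (P t * ((A ρ t - A r t) * g ρ t))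
        = g r 1 * ((ρ - r)⁻¹ • ∫ t in (0:ℝ)..1, P t * ((A ρ t - A r t) * g ρ t)) := by
          rw [intervalIntegral.integral_smul]
      _ = (ρ - r)⁻¹ • (g r 1 * ∫ t in (0:ℝ)..1, P t * ((A ρ t - A r t) * g ρ t)) :=
          mul_smul_comm _ _ _
      _ = (ρ - r)⁻¹ • (g ρ 1 - g r 1) := by rw [← hduh ρ hρ]
      _ = slope (fun ρ => g ρ 1) r ρ := (slope_def_module (fun ρ => g ρ 1) r ρ).symm
  -- the curvature identity
  have hrc : ContinuousOn (fun t : ℝ => (r:ℂ) * e2πi t) (Icc 0 1) :=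
    (continuous_const.mul continuous_e2πi).continuousOn
  have hmaps1 : MapsTo (fun t : ℝ => (r:ℂ) * e2πi t) (Icc 0 1) (Metric.ball (0:ℂ) R) :=
    fun t _ => hmem r hrIoo t
  have hiec : ContinuousOn (fun t : ℝ => Complex.I * e2πi t) (Icc (0:ℝ) 1) :=
    (continuous_const.mul continuous_e2πi).continuousOn
  have hec : ContinuousOn e2πi (Icc (0:ℝ) 1) := continuous_e2πi.continuousOn
  have hωtc : ContinuousOn (fun t : ℝ => ω ((r:ℂ) * e2πi t)) (Icc 0 1) :=
    hωc.comp hrc hmaps1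
  have hDωtc : ContinuousOn (fun t : ℝ => fderiv ℝ ω ((r:ℂ) * e2πi t)) (Icc 0 1) :=
    hDωc.comp hrc hmaps1
  have hΩc : ContinuousOn Ω (Icc (0:ℝ) 1) := by
    rw [hΩdef]
    simp only [curvature]
    exact ((((hDωtc.clm_apply hiec).clm_apply hec).sub
      ((hDωtc.clm_apply hec).clm_apply hiec)).add
      ((hωtc.clm_apply hiec).mul (hωtc.clm_apply hec))).sub
      ((hωtc.clm_apply hec).mul (hωtc.clm_apply hiec))
  have hΩint : IntervalIntegrable (fun t => P t * (Ω t * g r t)) volume 0 1 := by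
    apply ContinuousOn.intervalIntegrable
    rw [uIcc_of_le zero_le_one]
    exact hPc.mul (hΩc.mul (hgc r hrIoo))
  have hcurv : D = ∫ t in (0:ℝ)..1, P t * (((2 * π * r) • Ω t) * g r t) := by
    have hWd : ∀ t : ℝ, HasDerivAt (fun τ => ω ((r:ℂ) * e2πi τ) (e2πi τ))
        ((2 * π * r) • ((fderiv ℝ ω ((r:ℂ) * e2πi t)) (Complex.I * e2πi t) (e2πi t))
          + (2 * π) • (ω ((r:ℂ) * e2πi t) (Complex.I * e2πi t))) t := by
      intro t
      have h1 : HasDerivAt (fun τ : ℝ => (r:ℂ) * e2πi τ)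
          ((r:ℂ) * (2 * π * Complex.I * e2πi t)) t :=
        (hasDerivAt_e2πi t).const_mul (r:ℂ)
      have h2 := (hωd _ (hmem r hrIoo t)).comp_hasDerivAt t h1
      have h3 := h2.clm_apply (hasDerivAt_e2πi t)
      convert (preTransparency := .default) h3 using 1
      have e1 : (r:ℂ) * (2 * π * Complex.I * e2πi t)
          = (2 * π * r : ℝ) • (Complex.I * e2πi t) := by
        rw [Complex.real_smul]; push_cast; ring
      have e2 : 2 * (π:ℂ) * Complex.I * e2πi t = (2 * π : ℝ) • (Complex.I * e2πi t) := by
        rw [Complex.real_smul]; push_cast; ring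
      rw [e1, e2]
      simp only [_root_.map_smul, ContinuousLinearMap.smul_apply, Function.comp_apply]
    have hψ' : ∀ t ∈ Icc (0:ℝ) 1, HasDerivWithinAt
        (fun τ => P τ * (ω ((r:ℂ) * e2πi τ) (e2πi τ) * g r τ))
        (P t * (((2 * π * r) • Ω t) * g r t) - P t * (A' r t * g r t)) (Icc 0 1) t := by
      intro t ht
      have h := (hPode t ht).mul (((hWd t).hasDerivWithinAt).mul (hgode r hrIoo t ht))
      convert (preTransparency := .default) h using 1
      have hcurvdef : ∀ x u v, curvature ω x u v
          = fderiv ℝ ω x u v - fderiv ℝ ω x v u + ω x u * ω x v - ω x v * ω x u :=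
        fun _ _ _ => rfl
      simp only [hΩdef, hcurvdef, hAdef, hA'def, Pi.mul_apply]
      simp only [smul_sub, smul_add, sub_mul, add_mul, mul_sub, mul_add, smul_mul_assoc,
        mul_smul_comm, neg_mul, mul_neg, neg_add, neg_neg, neg_smul, smul_neg, mul_assoc]
      module
    have hωtc2 : ContinuousOn (fun t : ℝ => ω ((r:ℂ) * e2πi t) (e2πi t)) (Icc (0:ℝ) 1) :=
      hωtc.clm_apply hec
    have hψc : ContinuousOn (fun τ => P τ * (ω ((r:ℂ) * e2πi τ) (e2πi τ) * g r τ))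
        (Icc (0:ℝ) 1) := hPc.mul (hωtc2.mul (hgc r hrIoo))
    have hXc : ContinuousOn (fun t => P t * (((2 * π * r) • Ω t) * g r t)) (Icc (0:ℝ) 1) :=
      hPc.mul ((hΩc.const_smul (2 * π * r)).mul (hgc r hrIoo))
    have hYc : ContinuousOn (fun t => P t * (A' r t * g r t)) (Icc (0:ℝ) 1) :=
      hPc.mul ((hA'tc r hrJ).mul (hgc r hrIoo))
    have hXint : IntervalIntegrable (fun t => P t * (((2 * π * r) • Ω t) * g r t)) volume 0 1 :=
      ContinuousOn.intervalIntegrable (by rw [uIcc_of_le zero_le_one]; exact hXc)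
    have hYint : IntervalIntegrable (fun t => P t * (A' r t * g r t)) volume 0 1 :=
      ContinuousOn.intervalIntegrable (by rw [uIcc_of_le zero_le_one]; exact hYc)
    have hFTC := intervalIntegral.integral_eq_sub_of_hasDeriv_right_of_le zero_le_one hψc
      (fun t ht => ((hψ' t (Ioo_subset_Icc_self ht)).hasDerivAt
        (Icc_mem_nhds ht.1 ht.2)).hasDerivWithinAt) (hXint.sub hYint)
    have hzero1 : ω ((r:ℂ) * e2πi 1) (e2πi 1) = 0 := by
      rw [e2πi_one, mul_one]; exact haxial r hrIoo
    have hzero0 : ω ((r:ℂ) * e2πi 0) (e2πi 0) = 0 := by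
      rw [e2πi_zero, mul_one]; exact haxial r hrIoo
    have hft2 : (∫ t in (0:ℝ)..1,
        (P t * (((2 * π * r) • Ω t) * g r t) - P t * (A' r t * g r t))) = 0 := by
      rw [hFTC, hzero1, hzero0]
      simp
    rw [intervalIntegral.integral_sub hXint hYint] at hft2
    rw [hDdef]
    exact (sub_eq_zero.mp hft2).symm
  -- final assembly
  have hfin : g r 1 * D = (2 * π * r) • ∫ t in (0:ℝ)..1,
      g r 1 * (g r t)⁻¹ * Ω t * g r t := by
    rw [hcurv]
    have h1 : (∫ t in (0:ℝ)..1, P t * (((2 * π * r) • Ω t) * g r t))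
        = (2 * π * r) • ∫ t in (0:ℝ)..1, P t * (Ω t * g r t) := by
      rw [← intervalIntegral.integral_smul]
      apply intervalIntegral.integral_congr
      intro t _
      show P t * (((2 * π * r) • Ω t) * g r t) = (2 * π * r) • (P t * (Ω t * g r t))
      rw [smul_mul_assoc, mul_smul_comm]
    rw [h1, mul_smul_comm]
    congr 1
    have h2 := (ContinuousLinearMap.mul ℝ (Matrix (Fin n) (Fin n) ℂ)
      (g r 1)).intervalIntegral_comp_comm hΩint
    simp only [ContinuousLinearMap.mul_apply'] at h2
    rw [← h2]
    apply intervalIntegral.integral_congr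
    intro t _
    have hh : g r 1 * (g r t)⁻¹ * Ω t * g r t = g r 1 * (P t * (Ω t * g r t)) := by
      rw [hPdef, mul_assoc, mul_assoc]
    exact hh.symm
  rw [← hfin]
  exact hder

end Aux

/-- For a `C²` connection form `ω` on the disk `B_R ⊂ ℝ² ≃ ℂ` satisfying the
axial gauge condition `ω((s,0))[e₁] = 0` for `s ∈ (0,R)`, the holonomy `g_r(1)` along the circle
of radius `r` satisfies
`d/dr g_r(1) = 2πr ∫₀¹ g_r(1)·g_r(t)⁻¹·Ω(re^{2πit})[ie^{2πit}, e^{2πit}]·g_r(t) dt`. -/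
theorem hasDerivAt_holonomy_axial_gauge
    (n : ℕ) (hn : 1 ≤ n) (R : ℝ) (hR : 0 < R)
    (ω : ℂ → (ℂ →L[ℝ] Matrix (Fin n) (Fin n) ℂ))
    (hω : ContDiffOn ℝ 2 ω (Metric.ball (0:ℂ) R))
    (haxial : ∀ s ∈ Set.Ioo (0:ℝ) R, ω (s : ℂ) 1 = 0)
    (g : ℝ → ℝ → Matrix (Fin n) (Fin n) ℂ)
    (hg0 : ∀ r ∈ Set.Ioo (0:ℝ) R, g r 0 = 1)
    (hg : ∀ r ∈ Set.Ioo (0:ℝ) R, ∀ t ∈ Set.Icc (0:ℝ) 1,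
      HasDerivWithinAt (g r)
        (-((2 * π * r) • (ω (r * e2πi t) (Complex.I * e2πi t) * g r t))) (Set.Icc 0 1) t)
    (r : ℝ) (hr : r ∈ Set.Ioo (0:ℝ) R) :
    HasDerivAt (fun ρ => g ρ 1)
      ((2 * π * r) • ∫ t in (0:ℝ)..1,
        g r 1 * (g r t)⁻¹ *
          curvature ω (r * e2πi t) (Complex.I * e2πi t) (e2πi t) * g r t) r :=
  main_aux n R hR ω hω haxial g hg0 hg r hr
end

section
/- Let m ≥ 1, let a : ℝ^m → (ℝ^m →ₗ[ℝ] ℝ) be a continuous real 1-form, and let γ ∈ C¹([0,1], ℝ^m). The parallel transport of the associated U(1)-connection along γ is the path p : [0,1] → circle (the unit circle in ℂ) given by p(t) = exp(−i ∫₀ᵗ a(γ(s))[γ'(s)] ds). Then the amplitude of p in the circle group, with the metric induced by the Euclidean distance of ℂ (which is bi-invariant), satisfies A(p) = | ∫₀¹ a(γ(t))[γ'(t)] dt |. -/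
open Set
open scoped ENNReal

open MeasureTheory

namespace AmplitudeAux
open scoped NNReal

open Complex

lemma dist_circle_exp (x y : ℝ) :
    dist (Circle.exp x) (Circle.exp y)
      = ‖Complex.exp (x * I) - Complex.exp (y * I)‖ := by
  show dist (Circle.exp x : ℂ) (Circle.exp y : ℂ) = _
  rw [Complex.dist_eq, Circle.coe_exp, Circle.coe_exp]

lemma lipschitz_circle_exp : LipschitzWith 1 (fun x : ℝ => Circle.exp x) := by
  apply LipschitzWith.of_dist_le_mul
  intro x y
  rw [dist_circle_exp, Real.dist_eq]
  have hder : ∀ z ∈ (univ : Set ℝ),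
      HasDerivWithinAt (fun t : ℝ => Complex.exp (t * I)) (Complex.exp (z * I) * (1 * I)) univ z := by
    intro z _
    exact (((hasDerivAt_id z).ofReal_comp.mul_const I).cexp).hasDerivWithinAt
  have hbound : ∀ z ∈ (univ : Set ℝ), ‖Complex.exp (z * I) * (1 * I)‖ ≤ 1 := by
    intro z _
    rw [norm_mul, one_mul,
      Complex.norm_exp_ofReal_mul_I, Complex.norm_I, one_mul]
  have := Convex.norm_image_sub_le_of_norm_hasDerivWithin_le hder hbound convex_univ
    (mem_univ y) (mem_univ x)
  simpa [Complex.dist_eq, Real.norm_eq_abs] using this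

lemma dist_circle_exp_ge {x y : ℝ} (h : |x - y| ≤ 1) :
    |x - y| - |x - y| ^ 2 ≤ dist (Circle.exp x) (Circle.exp y) := by
  rw [dist_circle_exp]
  set w : ℂ := ((x - y : ℝ) : ℂ) * I with hw
  have habsw : ‖w‖ = |x - y| := by
    rw [hw, norm_mul, Complex.norm_I, mul_one, Complex.norm_real, Real.norm_eq_abs]
  have hfact : Complex.exp (x * I) - Complex.exp (y * I)
      = Complex.exp ((y : ℝ) * I) * (Complex.exp w - 1) := by
    rw [mul_sub, mul_one, ← Complex.exp_add, hw]
    push_cast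
    ring_nf
  rw [hfact, norm_mul, Complex.norm_exp_ofReal_mul_I, one_mul]
  have h1 : ‖Complex.exp w - 1 - w‖ ≤ ‖w‖ ^ 2 :=
    Complex.norm_exp_sub_one_sub_id_le (by rw [habsw]; exact h)
  have h2 : ‖w‖ - ‖Complex.exp w - 1‖
      ≤ ‖w - (Complex.exp w - 1)‖ := by
    simpa using norm_sub_norm_le w (Complex.exp w - 1)
  have h3 : ‖w - (Complex.exp w - 1)‖ = ‖Complex.exp w - 1 - w‖ := by
    rw [← norm_neg]
    ring_nf
  rw [habsw] at h1 h2
  linarith [h2, h1, h3 ▸ h2]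

/-- If `θ` is a continuous lift of `q` on `[0,1]`, then the total variation of `q` is at least
`|θ 1 - θ 0|`. -/
lemma evar_lower (q : ℝ → Circle) (θ : ℝ → ℝ) (hθ : ContinuousOn θ (Icc 0 1))
    (hlift : ∀ t ∈ Icc (0:ℝ) 1, Circle.exp (θ t) = q t) :
    ENNReal.ofReal |θ 1 - θ 0| ≤ eVariationOn q (Icc 0 1) := by
  set c := |θ 1 - θ 0| with hc
  have hc0 : 0 ≤ c := abs_nonneg _
  have key : ∀ ε : ℝ, 0 < ε → ε ≤ 1 →
      ENNReal.ofReal ((1 - ε) * c) ≤ eVariationOn q (Icc 0 1) := by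
    intro ε hε hε1
    obtain ⟨δ, hδ0, hδ⟩ := Metric.uniformContinuousOn_iff.mp
      (isCompact_Icc.uniformContinuousOn_of_continuous hθ) ε hε
    obtain ⟨N, hN⟩ := exists_nat_one_div_lt hδ0
    set n : ℕ := N + 1 with hn
    have hn0 : (0:ℝ) < n := by positivity
    set u : ℕ → ℝ := fun j => ((min j n : ℕ) : ℝ) / n with hu
    have humono : Monotone u := by
      intro i j hij
      have h' : ((min i n : ℕ) : ℝ) ≤ ((min j n : ℕ) : ℝ) := by
        exact_mod_cast min_le_min hij le_rfl
      exact (div_le_div_iff_of_pos_right hn0).mpr h'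
    have humem : ∀ j, u j ∈ Icc (0:ℝ) 1 := by
      intro j
      constructor
      · positivity
      · rw [hu, div_le_one hn0]
        exact_mod_cast min_le_right j n
    have hu0 : u 0 = 0 := by simp [hu]
    have hun : u n = 1 := by simp [hu, div_self hn0.ne']
    have hstep : ∀ j, u (j+1) - u j ≤ 1 / n := by
      intro j
      have hle : (min (j+1) n : ℕ) ≤ min j n + 1 := by
        calc min (j+1) n ≤ min (j+1) (n+1) := min_le_min le_rfl (Nat.le_succ n)
        _ = min j n + 1 := Nat.succ_min_succ j n
      have h' : ((min (j+1) n : ℕ) : ℝ) ≤ ((min j n : ℕ) : ℝ) + 1 := by exact_mod_cast hle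
      rw [hu, div_sub_div_same]
      exact (div_le_div_iff_of_pos_right hn0).mpr (by linarith)
    have hdistu : ∀ j, dist (u (j+1)) (u j) < δ := by
      intro j
      have hnn : 0 ≤ u (j+1) - u j := by
        have := humono (Nat.le_succ j)
        linarith
      rw [Real.dist_eq, _root_.abs_of_nonneg hnn]
      refine lt_of_le_of_lt (hstep j) ?_
      have : (n : ℝ) = (N : ℝ) + 1 := by push_cast [hn]; ring
      rw [this]
      exact hN
    have hd : ∀ j, |θ (u (j+1)) - θ (u j)| < ε := by
      intro j
      have := hδ (u (j+1)) (humem _) (u j) (humem _) (hdistu j)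
      rwa [Real.dist_eq] at this
    have pointwise : ∀ j, (1 - ε) * |θ (u (j+1)) - θ (u j)|
        ≤ dist (q (u (j+1))) (q (u j)) := by
      intro j
      rw [← hlift _ (humem (j+1)), ← hlift _ (humem j)]
      have h1 := dist_circle_exp_ge (x := θ (u (j+1))) (y := θ (u j))
        (le_of_lt (lt_of_lt_of_le (hd j) hε1))
      nlinarith [abs_nonneg (θ (u (j+1)) - θ (u j)), hd j]
    calc ENNReal.ofReal ((1 - ε) * c)
        ≤ ENNReal.ofReal (∑ i ∈ Finset.range n, dist (q (u (i+1))) (q (u i))) := by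
          apply ENNReal.ofReal_le_ofReal
          have hs1 : c ≤ ∑ i ∈ Finset.range n, |θ (u (i+1)) - θ (u i)| := by
            have hts := Finset.sum_range_sub (fun i => θ (u i)) n
            calc c = |∑ i ∈ Finset.range n, (θ (u (i+1)) - θ (u i))| := by
                  rw [hts, hun, hu0]
            _ ≤ ∑ i ∈ Finset.range n, |θ (u (i+1)) - θ (u i)| :=
                  Finset.abs_sum_le_sum_abs _ _
          calc (1 - ε) * c ≤ (1 - ε) * ∑ i ∈ Finset.range n, |θ (u (i+1)) - θ (u i)| :=
                mul_le_mul_of_nonneg_left hs1 (by linarith)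
          _ = ∑ i ∈ Finset.range n, (1 - ε) * |θ (u (i+1)) - θ (u i)| := Finset.mul_sum _ _ _
          _ ≤ ∑ i ∈ Finset.range n, dist (q (u (i+1))) (q (u i)) :=
                Finset.sum_le_sum fun i _ => pointwise i
      _ = ∑ i ∈ Finset.range n, ENNReal.ofReal (dist (q (u (i+1))) (q (u i))) :=
            ENNReal.ofReal_sum_of_nonneg fun i _ => dist_nonneg
      _ = ∑ i ∈ Finset.range n, edist (q (u (i+1))) (q (u i)) := by
            simp [edist_dist]
      _ ≤ eVariationOn q (Icc 0 1) := eVariationOn.sum_le (f := q) (n := n) humono humem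
  have htend : Filter.Tendsto (fun k : ℕ => ENNReal.ofReal ((1 - 1/((k:ℝ)+1)) * c))
      Filter.atTop (nhds (ENNReal.ofReal c)) := by
    have h1 : Filter.Tendsto (fun k : ℕ => (1 - 1/((k:ℝ)+1)) * c) Filter.atTop (nhds c) := by
      have h2 := (tendsto_const_nhds (x := (1:ℝ)).sub
        tendsto_one_div_add_atTop_nhds_zero_nat).mul_const c
      simpa using h2
    exact (ENNReal.continuous_ofReal.tendsto c).comp h1
  refine le_of_tendsto htend (Filter.Eventually.of_forall fun k => key _ ?_ ?_)
  · positivity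
  · rw [div_le_one (by positivity)]
    linarith [Nat.cast_nonneg (α := ℝ) k]

/-- Auxiliary recursion: successive lifts along the homotopy grid. -/
noncomputable def liftSeq (L : ℝ → ℝ) (v : ℕ → ℝ → ℂ) : ℕ → ℝ → ℝ
  | 0 => L
  | (k+1) => fun t => liftSeq L v k t + Complex.arg (v (k+1) t / v k t)

/-- Homotopy lifting through `Circle.exp`, by hand. If `L` is a continuous lift of `p` and
`q` is homotopic to `p` rel endpoints, then `q` has a continuous lift agreeing with `L`
at the endpoints. -/
lemma exists_lift_of_homotopic (p q : ℝ → Circle) (L : ℝ → ℝ)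
    (hL : ContinuousOn L (Icc 0 1))
    (hLp : ∀ t ∈ Icc (0:ℝ) 1, Circle.exp (L t) = p t)
    (hhom : HomotopicRelEndpoints p q) :
    ∃ θ : ℝ → ℝ, ContinuousOn θ (Icc 0 1) ∧ (∀ t ∈ Icc (0:ℝ) 1, Circle.exp (θ t) = q t) ∧
      θ 0 = L 0 ∧ θ 1 = L 1 := by
  obtain ⟨H, hH, hH0, hH1, hHa, hHb⟩ := hhom
  have h01 : (0:ℝ) ∈ Icc (0:ℝ) 1 := left_mem_Icc.mpr zero_le_one
  have h11 : (1:ℝ) ∈ Icc (0:ℝ) 1 := right_mem_Icc.mpr zero_le_one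
  set S : Set (ℝ × ℝ) := Icc 0 1 ×ˢ Icc 0 1 with hS
  have hScomp : IsCompact S := isCompact_Icc.prod isCompact_Icc
  obtain ⟨δ, hδ0, hδ⟩ := Metric.uniformContinuousOn_iff.mp
    (hScomp.uniformContinuousOn_of_continuous hH) 2 (by norm_num)
  obtain ⟨N, hN⟩ := exists_nat_one_div_lt hδ0
  set n : ℕ := N + 1 with hn
  have hn0 : (0:ℝ) < n := by positivity
  set v : ℕ → ℝ → ℂ := fun k t => (H ((k : ℝ)/n, t) : ℂ) with hv
  set θ : ℕ → ℝ → ℝ := liftSeq L v with hθ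
  have hmemk : ∀ k : ℕ, k ≤ n → ((k : ℝ)/n) ∈ Icc (0:ℝ) 1 := by
    intro k hk
    constructor
    · positivity
    · rw [div_le_one hn0]; exact_mod_cast hk
  have main : ∀ k : ℕ, k ≤ n →
      ContinuousOn (θ k) (Icc 0 1) ∧
      (∀ t ∈ Icc (0:ℝ) 1, Circle.exp (θ k t) = H ((k : ℝ)/n, t)) ∧
      θ k 0 = L 0 ∧ θ k 1 = L 1 := by
    intro k
    induction k with
    | zero =>
      intro _
      refine ⟨hL, fun t ht => ?_, rfl, rfl⟩
      rw [show ((0:ℕ):ℝ)/n = 0 by simp, hH0 t ht]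
      exact hLp t ht
    | succ k ih =>
      intro hk
      obtain ⟨ihc, ihe, ih0, ih1⟩ := ih (Nat.le_of_succ_le hk)
      have hkn : k ≤ n := Nat.le_of_succ_le hk
      set s1 : ℝ := (k : ℝ)/n with hs1def
      set s2 : ℝ := ((k+1 : ℕ) : ℝ)/n with hs2def
      have hs1 : s1 ∈ Icc (0:ℝ) 1 := hmemk k hkn
      have hs2 : s2 ∈ Icc (0:ℝ) 1 := hmemk (k+1) hk
      -- the comparison quotient
      set r : ℝ → ℂ := fun t => (H (s2, t) : ℂ) / (H (s1, t) : ℂ) with hr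
      have hRmem : ∀ t ∈ Icc (0:ℝ) 1, (s1, t) ∈ S ∧ (s2, t) ∈ S := by
        intro t ht
        exact ⟨⟨hs1, ht⟩, ⟨hs2, ht⟩⟩
      have hdist : ∀ t ∈ Icc (0:ℝ) 1, dist (H (s2, t)) (H (s1, t)) < 2 := by
        intro t ht
        refine hδ _ (hRmem t ht).2 _ (hRmem t ht).1 ?_
        rw [Prod.dist_eq]
        simp only [dist_self]
        have hd12 : dist s2 s1 = 1 / (n:ℝ) := by
          have hss : s2 - s1 = 1 / (n:ℝ) := by
            rw [hs2def, hs1def, div_sub_div_same]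
            push_cast
            ring
          rw [Real.dist_eq, hss, _root_.abs_of_nonneg (by positivity)]
        rw [hd12]
        have : (1:ℝ)/n = 1/((N:ℝ)+1) := by rw [hn]; push_cast; ring
        rw [max_eq_left (by positivity)]
        rw [this]
        exact hN
      have habsr : ∀ t, ‖r t‖ = 1 := by
        intro t
        rw [hr]
        simp [norm_div, Circle.norm_coe]
      have hrne : ∀ t ∈ Icc (0:ℝ) 1, r t ≠ -1 := by
        intro t ht hcon
        have hz : (H (s2, t) : ℂ) = -(H (s1, t) : ℂ) := by
          rw [hr] at hcon
          rw [div_eq_iff (Circle.coe_ne_zero _)] at hcon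
          rw [hcon]; ring
        have : dist (H (s2, t)) (H (s1, t)) = 2 := by
          show dist (H (s2, t) : ℂ) (H (s1, t) : ℂ) = 2
          rw [hz, Complex.dist_eq]
          have : -(H (s1, t) : ℂ) - (H (s1, t) : ℂ) = -(2 * (H (s1, t) : ℂ)) := by ring
          rw [this, norm_neg, norm_mul]
          simp [Circle.norm_coe]
        linarith [hdist t ht]
      have hslit : ∀ t ∈ Icc (0:ℝ) 1, r t ∈ Complex.slitPlane := by
        intro t ht
        rw [Complex.mem_slitPlane_iff]
        rcases eq_or_ne (r t).im 0 with him | him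
        · left
          have hre : r t = ((r t).re : ℂ) := by
            apply Complex.ext <;> simp [him]
          have : |(r t).re| = 1 := by
            have := habsr t
            rw [hre, Complex.norm_real, Real.norm_eq_abs] at this
            exact this
          rcases abs_eq (by norm_num : (0:ℝ) ≤ 1) |>.mp this with h1 | h1
          · rw [h1]; norm_num
          · exfalso
            apply hrne t ht
            rw [hre, h1]
            norm_num
        · right; exact him
      have hrcont : ContinuousOn r (Icc 0 1) := by
        have hc2 : ContinuousOn (fun t : ℝ => (H (s2, t) : ℂ)) (Icc 0 1) := by
          apply continuous_subtype_val.comp_continuousOn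
          exact hH.comp (Continuous.prodMk_right s2).continuousOn
            (fun t ht => (hRmem t ht).2)
        have hc1 : ContinuousOn (fun t : ℝ => (H (s1, t) : ℂ)) (Icc 0 1) := by
          apply continuous_subtype_val.comp_continuousOn
          exact hH.comp (Continuous.prodMk_right s1).continuousOn
            (fun t ht => (hRmem t ht).1)
        exact hc2.div hc1 (fun t _ => Circle.coe_ne_zero _)
      have hargcont : ContinuousOn (fun t => Complex.arg (r t)) (Icc 0 1) := by
        intro t ht
        exact (Complex.continuousAt_arg (hslit t ht)).comp_continuousWithinAt (hrcont t ht)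
      have hstep : θ (k+1) = fun t => θ k t + Complex.arg (r t) := by
        funext t
        simp only [hθ, liftSeq, hr, hv, hs1def, hs2def]
      refine ⟨?_, ?_, ?_, ?_⟩
      · rw [hstep]
        exact ihc.add hargcont
      · intro t ht
        rw [hstep]
        have hcoe : r t = ((H (s2, t) / H (s1, t) : Circle) : ℂ) := by
          rw [Circle.coe_div, hr]
        rw [Circle.exp_add, ihe t ht]
        rw [hcoe, Circle.exp_arg]
        simp
      · rw [hstep]
        have e2 : H (s2, 0) = p 0 := hHa s2 hs2
        have e1 : H (s1, 0) = p 0 := hHa s1 hs1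
        simp only [hr, e1, e2]
        rw [div_self (Circle.coe_ne_zero _), Complex.arg_one, add_zero, ih0]
      · rw [hstep]
        have e2 : H (s2, 1) = p 1 := hHb s2 hs2
        have e1 : H (s1, 1) = p 1 := hHb s1 hs1
        simp only [hr, e1, e2]
        rw [div_self (Circle.coe_ne_zero _), Complex.arg_one, add_zero, ih1]
  obtain ⟨hc, he, h0, h1⟩ := main n le_rfl
  refine ⟨θ n, hc, fun t ht => ?_, h0, h1⟩
  rw [he t ht, show ((n:ℕ):ℝ)/n = 1 from div_self hn0.ne', hH1 t ht]

end AmplitudeAux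

open AmplitudeAux
open scoped NNReal

/-- For a continuous real 1-form `a` on `ℝ^m` and a `C¹` curve `γ`, the
parallel transport `p(t) = exp(−i ∫₀ᵗ a(γ(s))[γ'(s)] ds)` of the `U(1)`-connection `i·a` along
`γ` has amplitude `A(p) = |∫₀¹ a(γ(t))[γ'(t)] dt|` in the circle group. -/
theorem amplitude_circle_group_eq_abs_integral
    (m : ℕ) (hm : 1 ≤ m)
    (a : EuclideanSpace ℝ (Fin m) → (EuclideanSpace ℝ (Fin m) →L[ℝ] ℝ))
    (ha : Continuous a)
    (γ γ' : ℝ → EuclideanSpace ℝ (Fin m))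
    (hγ : ∀ t ∈ Set.Icc (0:ℝ) 1, HasDerivWithinAt γ (γ' t) (Set.Icc 0 1) t)
    (hγ' : ContinuousOn γ' (Set.Icc 0 1))
    (p : ℝ → Circle)
    (hp : ∀ t : ℝ, p t = Circle.exp (-(∫ s in (0:ℝ)..t, a (γ s) (γ' s)))) :
    amplitude p = ENNReal.ofReal |∫ t in (0:ℝ)..1, a (γ t) (γ' t)| := by
  set g : ℝ → ℝ := fun s => a (γ s) (γ' s) with hg
  set Fi : ℝ → ℝ := fun t => ∫ s in (0:ℝ)..t, g s with hFi
  have hγc : ContinuousOn γ (Icc 0 1) := fun t ht => (hγ t ht).continuousWithinAt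
  have hgc : ContinuousOn g (Icc 0 1) := (ha.comp_continuousOn hγc).clm_apply hγ'
  have hint : IntegrableOn g (uIcc (0:ℝ) 1) := by
    rw [uIcc_of_le zero_le_one]
    exact hgc.integrableOn_Icc
  have hFc : ContinuousOn Fi (Icc 0 1) := by
    have := intervalIntegral.continuousOn_primitive_interval hint
    rwa [uIcc_of_le zero_le_one] at this
  have hF0 : Fi 0 = 0 := intervalIntegral.integral_same
  set L : ℝ → ℝ := fun t => -(Fi t) with hL
  have hLc : ContinuousOn L (Icc 0 1) := hFc.neg
  have hLp : ∀ t ∈ Icc (0:ℝ) 1, Circle.exp (L t) = p t := fun t _ => (hp t).symm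
  have h01 : (0:ℝ) ∈ Icc (0:ℝ) 1 := left_mem_Icc.mpr zero_le_one
  have h11 : (1:ℝ) ∈ Icc (0:ℝ) 1 := right_mem_Icc.mpr zero_le_one
  -- lower bound
  have hlow : ENNReal.ofReal |Fi 1| ≤ amplitude p := by
    refine le_iInf fun q => le_iInf fun hqc => le_iInf fun hq0 => le_iInf fun hq1 =>
      le_iInf fun hhom => ?_
    obtain ⟨θ, hθc, hθq, hθ0, hθ1⟩ := exists_lift_of_homotopic p q L hLc hLp hhom
    have habs : |θ 1 - θ 0| = |Fi 1| := by
      rw [hθ0, hθ1, hL]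
      simp [hF0, abs_neg]
    rw [← habs]
    exact evar_lower q θ hθc hθq
  -- upper bound: the "straight" competitor
  have hup : amplitude p ≤ ENNReal.ofReal |Fi 1| := by
    set qs : ℝ → Circle := fun t => Circle.exp (t * (-(Fi 1))) with hqs
    have hqc : ContinuousOn qs (Icc 0 1) :=
      (lipschitz_circle_exp.continuous.comp (continuous_id.mul continuous_const)).continuousOn
    have hp'' : ∀ t : ℝ, p t = Circle.exp (-(Fi t)) := hp
    have hq0 : qs 0 = p 0 := by
      rw [hp'' 0, hqs, hF0]
      norm_num
    have hq1 : qs 1 = p 1 := by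
      rw [hp'' 1]
      show Circle.exp ((1:ℝ) * (-(Fi 1))) = _
      rw [one_mul]
    have hp' : ∀ t : ℝ, p t = Circle.exp (-(Fi t)) := hp
    have hhom : HomotopicRelEndpoints p qs := by
      refine ⟨fun x => Circle.exp (-((1 - x.1) * Fi x.2 + x.1 * (x.2 * Fi 1))), ?_, ?_, ?_, ?_, ?_⟩
      · apply lipschitz_circle_exp.continuous.comp_continuousOn
        apply ContinuousOn.neg
        apply ContinuousOn.add
        · exact (continuous_const.sub continuous_fst).continuousOn.mul
            (hFc.comp continuous_snd.continuousOn (fun x hx => hx.2))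
        · exact (continuous_fst.mul (continuous_snd.mul continuous_const)).continuousOn
      · intro t ht
        show Circle.exp (-((1 - (0:ℝ)) * Fi t + (0:ℝ) * (t * Fi 1))) = p t
        rw [show -((1 - (0:ℝ)) * Fi t + (0:ℝ) * (t * Fi 1)) = -(Fi t) from by ring]
        exact (hp' t).symm
      · intro t ht
        show Circle.exp (-((1 - (1:ℝ)) * Fi t + (1:ℝ) * (t * Fi 1))) = qs t
        rw [show -((1 - (1:ℝ)) * Fi t + (1:ℝ) * (t * Fi 1)) = t * (-(Fi 1)) from by ring]
      · intro s hs
        show Circle.exp (-((1 - s) * Fi 0 + s * ((0:ℝ) * Fi 1))) = p 0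
        rw [show -((1 - s) * Fi 0 + s * ((0:ℝ) * Fi 1)) = -(Fi 0) from by rw [hF0]; ring]
        exact (hp' 0).symm
      · intro s hs
        show Circle.exp (-((1 - s) * Fi 1 + s * ((1:ℝ) * Fi 1))) = p 1
        rw [show -((1 - s) * Fi 1 + s * ((1:ℝ) * Fi 1)) = -(Fi 1) from by ring]
        exact (hp' 1).symm
    have h1 : eVariationOn qs (Icc 0 1)
        ≤ ((1:ℝ≥0) : ℝ≥0∞) * eVariationOn (fun t : ℝ => t * (-(Fi 1))) (Icc 0 1) := by
      have := (lipschitz_circle_exp.lipschitzOnWith (s := univ)).comp_eVariationOn_le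
        (g := fun t : ℝ => t * (-(Fi 1))) (s := Icc 0 1) (mapsTo_univ _ _)
      exact this
    have hlip : LipschitzWith (|Fi 1|).toNNReal (fun t : ℝ => t * (-(Fi 1))) := by
      apply LipschitzWith.of_dist_le_mul
      intro x y
      rw [Real.dist_eq, Real.dist_eq, Real.coe_toNNReal _ (abs_nonneg _)]
      have : x * (-(Fi 1)) - y * (-(Fi 1)) = (x - y) * (-(Fi 1)) := by ring
      rw [this, abs_mul, abs_neg, mul_comm]
    have h2 : eVariationOn (fun t : ℝ => t * (-(Fi 1))) (Icc 0 1)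
        ≤ (|Fi 1|).toNNReal * eVariationOn (id : ℝ → ℝ) (Icc 0 1) := by
      have := (hlip.lipschitzOnWith (s := univ)).comp_eVariationOn_le
        (g := (id : ℝ → ℝ)) (s := Icc 0 1) (mapsTo_univ _ _)
      simpa using this
    have hid : eVariationOn (id : ℝ → ℝ) (Icc 0 1) ≤ ENNReal.ofReal 1 := by
      have hmono : MonotoneOn (id : ℝ → ℝ) (Icc 0 1) := fun x _ y _ h => h
      have := hmono.eVariationOn_le h01 h11
      simpa using this
    have hfinal : eVariationOn qs (Icc 0 1) ≤ ENNReal.ofReal |Fi 1| := by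
      refine h1.trans ?_
      rw [ENNReal.coe_one, one_mul]
      refine h2.trans ?_
      calc ((|Fi 1|).toNNReal : ℝ≥0∞) * eVariationOn (id : ℝ → ℝ) (Icc 0 1)
          ≤ ((|Fi 1|).toNNReal : ℝ≥0∞) * ENNReal.ofReal 1 := by
            exact mul_le_mul_right hid _
        _ = ENNReal.ofReal |Fi 1| := by
            rw [ENNReal.ofReal_one, mul_one, ENNReal.ofReal]
    refine le_trans ?_ hfinal
    exact iInf_le_of_le qs (iInf_le_of_le hqc (iInf_le_of_le hq0 (iInf_le_of_le hq1
      (iInf_le_of_le hhom le_rfl))))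
  exact le_antisymm hup hlow
end

section
/- Let n ≥ 1, m ≥ 1, let ω : ℝ^m → (ℝ^m →ₗ[ℝ] Matrix n n ℂ) be a continuous connection form, let u : ℝ^m → GL(n, ℂ) be C¹, and let ω̃ be the gauge transformation of ω by u, i.e. ω̃(x)[w] = u(x)⁻¹·(Du(x)[w]) + u(x)⁻¹·ω(x)[w]·u(x). Then for every C¹ curve γ : [0,1] → ℝ^m, the parallel transports Pt_γ of ω and P̃t_γ of ω̃ along γ are related by P̃t_γ(t) = u(γ(t))⁻¹ · Pt_γ(t) · u(γ(0)) for every t ∈ [0,1]. In particular the holonomies along a closed curve in the two gauges are conjugate. -/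
open Set
open scoped Matrix

attribute [local instance] Matrix.frobeniusNormedAddCommGroup Matrix.frobeniusNormedSpace
attribute [local instance] Matrix.frobeniusNormedRing Matrix.frobeniusNormedAlgebra

set_option maxHeartbeats 1000000

/-- If `ω̃` is the gauge transformation of a continuous connection form `ω` by
a `C¹` map `u : ℝ^m → GL(n, ℂ)`, then the parallel transports of `ω` and `ω̃` along a `C¹` curve
`γ` are related by `P̃t_γ(t) = u(γ(t))⁻¹ · Pt_γ(t) · u(γ(0))`. -/
theorem parallel_transport_gauge_transformation
    (n m : ℕ) (hn : 1 ≤ n) (hm : 1 ≤ m)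
    (ω : EuclideanSpace ℝ (Fin m) → (EuclideanSpace ℝ (Fin m) →L[ℝ] Matrix (Fin n) (Fin n) ℂ))
    (hω : Continuous ω)
    (u : EuclideanSpace ℝ (Fin m) → Matrix (Fin n) (Fin n) ℂ)
    (hu : ContDiff ℝ 1 u)
    (huunit : ∀ x, IsUnit (u x))
    (ωt : EuclideanSpace ℝ (Fin m) → EuclideanSpace ℝ (Fin m) → Matrix (Fin n) (Fin n) ℂ)
    (hωt : ∀ x w, ωt x w = (u x)⁻¹ * fderiv ℝ u x w + (u x)⁻¹ * ω x w * u x)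
    (γ γ' : ℝ → EuclideanSpace ℝ (Fin m))
    (hγ : ∀ t ∈ Set.Icc (0:ℝ) 1, HasDerivWithinAt γ (γ' t) (Set.Icc 0 1) t)
    (hγ' : ContinuousOn γ' (Set.Icc 0 1))
    (Pt : ℝ → Matrix (Fin n) (Fin n) ℂ)
    (hPt0 : Pt 0 = 1)
    (hPt : ∀ t ∈ Set.Icc (0:ℝ) 1,
      HasDerivWithinAt Pt (-(ω (γ t) (γ' t) * Pt t)) (Set.Icc 0 1) t)
    (Ptt : ℝ → Matrix (Fin n) (Fin n) ℂ)
    (hPtt0 : Ptt 0 = 1)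
    (hPtt : ∀ t ∈ Set.Icc (0:ℝ) 1,
      HasDerivWithinAt Ptt (-(ωt (γ t) (γ' t) * Ptt t)) (Set.Icc 0 1) t) :
    ∀ t ∈ Set.Icc (0:ℝ) 1, Ptt t = (u (γ t))⁻¹ * Pt t * u (γ 0) := by
  -- The matrix-valued coefficient of the ODE
  set A : ℝ → Matrix (Fin n) (Fin n) ℂ := fun t => ω (γ t) (γ' t) with hAdef
  have hγcont : ContinuousOn γ (Icc 0 1) := fun t ht => (hγ t ht).continuousWithinAt
  have hAcont : ContinuousOn A (Icc 0 1) :=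
    (hω.comp_continuousOn hγcont).clm_apply hγ'
  -- uniform bound on `A` over `[0,1]`
  obtain ⟨C, hC⟩ : ∃ C, ∀ t ∈ Icc (0:ℝ) 1, ‖A t‖ ≤ C :=
    isCompact_Icc.exists_bound_of_continuousOn hAcont
  have hC0 : 0 ≤ C := le_trans (norm_nonneg _) (hC 0 ⟨le_refl 0, zero_le_one⟩)
  -- the vector field, extended to all times using clamping
  set cl : ℝ → ℝ := fun t => min (max t 0) 1 with hcl
  have hclmem : ∀ t, cl t ∈ Icc (0:ℝ) 1 := fun t =>
    ⟨le_min (le_max_right _ _) zero_le_one, min_le_right _ _⟩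
  have hcleq : ∀ t ∈ Icc (0:ℝ) 1, cl t = t := fun t ht => by
    simp [hcl, max_eq_left ht.1, min_eq_left ht.2]
  set v : ℝ → Matrix (Fin n) (Fin n) ℂ → Matrix (Fin n) (Fin n) ℂ :=
    fun t X => -(A (cl t) * X) with hvdef
  -- Lipschitz bound for the vector field
  have hv : ∀ t, LipschitzWith C.toNNReal (v t) := by
    intro t
    apply LipschitzWith.of_dist_le_mul
    intro X Y
    rw [dist_eq_norm, dist_eq_norm]
    have : v t X - v t Y = -(A (cl t) * (X - Y)) := by
      show -(A (cl t) * X) - -(A (cl t) * Y) = _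
      rw [mul_sub, neg_sub]
      abel
    rw [this, norm_neg]
    calc ‖A (cl t) * (X - Y)‖ ≤ ‖A (cl t)‖ * ‖X - Y‖ := norm_mul_le _ _
      _ ≤ C * ‖X - Y‖ := by
          apply mul_le_mul_of_nonneg_right (hC _ (hclmem t)) (norm_nonneg _)
      _ = C.toNNReal * ‖X - Y‖ := by
          rw [Real.coe_toNNReal _ hC0]
  -- invertibility facts
  have hUdet : ∀ x, IsUnit (u x).det := fun x =>
    (Matrix.isUnit_iff_isUnit_det _).1 (huunit x)
  have hUinv : ∀ x, u x * (u x)⁻¹ = 1 := fun x => Matrix.mul_nonsing_inv _ (hUdet x)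
  have hUinv' : ∀ x, (u x)⁻¹ * u x = 1 := fun x => Matrix.nonsing_inv_mul _ (hUdet x)
  -- the two candidate solutions
  set w : ℝ → Matrix (Fin n) (Fin n) ℂ := fun t => u (γ t) * Ptt t with hwdef
  set g : ℝ → Matrix (Fin n) (Fin n) ℂ := fun t => Pt t * u (γ 0) with hgdef
  have hudiff : Differentiable ℝ u := hu.differentiable one_ne_zero
  -- derivative of `w` within `Icc 0 1`
  have hw' : ∀ t ∈ Icc (0:ℝ) 1, HasDerivWithinAt w (v t (w t)) (Icc 0 1) t := by
    intro t ht
    have huγ : HasDerivWithinAt (fun s => u (γ s))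
        (fderiv ℝ u (γ t) (γ' t)) (Icc 0 1) t :=
      (hudiff (γ t)).hasFDerivAt.comp_hasDerivWithinAt t (hγ t ht)
    have hmul := huγ.mul (hPtt t ht)
    convert hmul using 1
    case e'_4 | e'_5 | e'_6 => rfl
    case e'_8 => rfl
    rw [hωt]
    simp only [hvdef, hwdef, hcleq t ht, hAdef]
    set U := u (γ t)
    set Ui := (u (γ t))⁻¹
    set D := fderiv ℝ u (γ t) (γ' t)
    set P := Ptt t
    set B := ω (γ t) (γ' t)
    have h1 : U * Ui = 1 := hUinv _
    have e1 : U * (Ui * D * P) = D * P := by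
      rw [mul_assoc Ui D P, ← mul_assoc U Ui, h1, one_mul]
    have e2 : U * (Ui * B * U * P) = B * (U * P) := by
      rw [mul_assoc (Ui * B) U P, mul_assoc Ui B (U * P), ← mul_assoc U Ui, h1, one_mul]
    rw [add_mul, mul_neg, mul_add, e1, e2]
    abel
  -- derivative of `g` within `Icc 0 1`
  have hg' : ∀ t ∈ Icc (0:ℝ) 1, HasDerivWithinAt g (v t (g t)) (Icc 0 1) t := by
    intro t ht
    have := (hPt t ht).mul_const (u (γ 0))
    convert this using 1
    case e'_4 | e'_5 | e'_6 => rfl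
    simp only [hvdef, hgdef, hcleq t ht, hAdef]
    rw [neg_mul, mul_assoc]
  have hweq : EqOn w g (Icc 0 1) := by
    apply ODE_solution_unique_of_mem_Icc_right
      (fun t _ => (hv t).lipschitzOnWith (s := univ))
      (fun t ht => (hw' t ht).continuousWithinAt)
      ?_ (fun _ _ => trivial)
      (fun t ht => (hg' t ht).continuousWithinAt)
      ?_ (fun _ _ => trivial)
    · simp [hwdef, hgdef, hPt0, hPtt0]
    · intro t ht
      exact (hw' t (Ico_subset_Icc_self ht)).mono_of_mem_nhdsWithin (Icc_mem_nhdsGE_of_mem ht)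
    · intro t ht
      exact (hg' t (Ico_subset_Icc_self ht)).mono_of_mem_nhdsWithin (Icc_mem_nhdsGE_of_mem ht)
  intro t ht
  have h := hweq ht
  simp only [hwdef, hgdef] at h
  calc Ptt t = ((u (γ t))⁻¹ * u (γ t)) * Ptt t := by rw [hUinv', one_mul]
    _ = (u (γ t))⁻¹ * (u (γ t) * Ptt t) := by rw [mul_assoc]
    _ = (u (γ t))⁻¹ * (Pt t * u (γ 0)) := by rw [h]
    _ = (u (γ t))⁻¹ * Pt t * u (γ 0) := by rw [mul_assoc]
end
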